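/- There exist a function f : ℕ → ℕ and a polynomial p such that for all sequential vset-automata A1 and A2 there exists a sequential vset-automaton A with ⟦A⟧(d) = ⟦A1 ⋈ A2⟧(d) for every document d, whose total size (number of states plus number of transitions) is at most f(k)·p(size of A1 + size of A2), where k = |Vars(A1) ∩ Vars(A2)|. -/

import Mathlib

namespace Spanners

open scoped Classical

/-! ### Spans and mappings -/

abbrev Span := ℕ × ℕ

abbrev VMapping := ℕ → Option Span

def emptyMapping : VMapping := fun _ => none

def mapDom (μ : VMapping) : Set ℕ := {x | μ x ≠ none}

/-- Two mappings are compatible if they agree on every common variable. -/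
def Compatible (μ1 μ2 : VMapping) : Prop :=
  ∀ x s1 s2, μ1 x = some s1 → μ2 x = some s2 → s1 = s2

def DisjointDom (μ1 μ2 : VMapping) : Prop :=
  ∀ x, μ1 x = none ∨ μ2 x = none

def munion (μ1 μ2 : VMapping) : VMapping := fun x =>
  match μ1 x with
  | some s => some s
  | none => μ2 x

def minsert (x : ℕ) (s : Span) (μ : VMapping) : VMapping :=
  fun y => if y = x then some s else μ y

/-- Natural join of two sets of mappings. -/
def joinSet (S1 S2 : Set VMapping) : Set VMapping :=
  {μ | ∃ μ1 ∈ S1, ∃ μ2 ∈ S2, Compatible μ1 μ2 ∧ μ = munion μ1 μ2}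

/-- Difference of two sets of mappings. -/
def diffSet (S1 S2 : Set VMapping) : Set VMapping :=
  {μ1 | μ1 ∈ S1 ∧ ∀ μ2 ∈ S2, ¬ Compatible μ1 μ2}

/-- Restriction of a mapping to a set of variables. -/
noncomputable def restrictMap (μ : VMapping) (V : Set ℕ) : VMapping :=
  fun x => if x ∈ V then μ x else none

/-- Projection of a set of mappings to a set of variables. -/
def projSet (V : Set ℕ) (S : Set VMapping) : Set VMapping :=
  {μ' | ∃ μ ∈ S, μ' = restrictMap μ V}

/-! ### Regex formulas -/

inductive RGX (Sig : Type) where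
  | empty : RGX Sig
  | eps : RGX Sig
  | letter : Sig → RGX Sig
  | union : RGX Sig → RGX Sig → RGX Sig
  | concat : RGX Sig → RGX Sig → RGX Sig
  | star : RGX Sig → RGX Sig
  | bind : ℕ → RGX Sig → RGX Sig

variable {Sig : Type}

def RGX.vars : RGX Sig → Finset ℕ
  | .empty => ∅
  | .eps => ∅
  | .letter _ => ∅
  | .union a b => a.vars ∪ b.vars
  | .concat a b => a.vars ∪ b.vars
  | .star a => a.vars
  | .bind x a => insert x a.vars

def RGX.size : RGX Sig → ℕ
  | .empty => 1
  | .eps => 1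
  | .letter _ => 1
  | .union a b => a.size + b.size + 1
  | .concat a b => a.size + b.size + 1
  | .star a => a.size + 1
  | .bind _ a => a.size + 1

/-- The schemaless semantics `⟨α⟩(d)`: `RMatch α d i j μ` means `([i,j⟩, μ) ∈ ⟨α⟩(d)`. -/
inductive RMatch : RGX Sig → List Sig → ℕ → ℕ → VMapping → Prop where
  | eps {d : List Sig} {i : ℕ} (h1 : 1 ≤ i) (h2 : i ≤ d.length + 1) :
      RMatch .eps d i i emptyMapping
  | letter {d : List Sig} {i : ℕ} {σ : Sig} (h1 : 1 ≤ i) (h2 : d[i - 1]? = some σ) :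
      RMatch (.letter σ) d i (i + 1) emptyMapping
  | unionL {a b : RGX Sig} {d : List Sig} {i j : ℕ} {μ : VMapping}
      (h : RMatch a d i j μ) : RMatch (.union a b) d i j μ
  | unionR {a b : RGX Sig} {d : List Sig} {i j : ℕ} {μ : VMapping}
      (h : RMatch b d i j μ) : RMatch (.union a b) d i j μ
  | concat {a b : RGX Sig} {d : List Sig} {i k j : ℕ} {μ1 μ2 : VMapping}
      (h1 : RMatch a d i k μ1) (h2 : RMatch b d k j μ2) (hd : DisjointDom μ1 μ2) :
      RMatch (.concat a b) d i j (munion μ1 μ2)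
  | bind {x : ℕ} {a : RGX Sig} {d : List Sig} {i j : ℕ} {μ : VMapping}
      (h : RMatch a d i j μ) (hx : μ x = none) :
      RMatch (.bind x a) d i j (minsert x (i, j) μ)
  | starNil {a : RGX Sig} {d : List Sig} {i : ℕ} (h1 : 1 ≤ i) (h2 : i ≤ d.length + 1) :
      RMatch (.star a) d i i emptyMapping
  | starCons {a : RGX Sig} {d : List Sig} {i k j : ℕ} {μ1 μ2 : VMapping}
      (h1 : RMatch a d i k μ1) (h2 : RMatch (.star a) d k j μ2) (hd : DisjointDom μ1 μ2) :
      RMatch (.star a) d i j (munion μ1 μ2)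

/-- `⟦α⟧(d)`: mappings extracted with the full span. -/
def rgxSem (α : RGX Sig) (d : List Sig) : Set VMapping :=
  {μ | RMatch α d 1 (d.length + 1) μ}

/-- Sequential regex formulas. -/
def RGX.Sequential : RGX Sig → Prop
  | .empty => True
  | .eps => True
  | .letter _ => True
  | .union a b => a.Sequential ∧ b.Sequential
  | .concat a b => a.Sequential ∧ b.Sequential ∧ Disjoint a.vars b.vars
  | .star a => a.Sequential ∧ a.vars = ∅
  | .bind x a => a.Sequential ∧ x ∉ a.vars

/-- Variable-free words over the alphabet (built from ε, letters and concatenation). -/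
inductive RGX.IsWord : RGX Sig → Prop where
  | eps : RGX.IsWord .eps
  | letter (σ : Sig) : RGX.IsWord (.letter σ)
  | concat {a b : RGX Sig} : a.IsWord → b.IsWord → RGX.IsWord (.concat a b)

/-- Functional for a set `V` of variables. -/
inductive FunctionalFor : RGX Sig → Finset ℕ → Prop where
  | word {α : RGX Sig} (h : α.IsWord) : FunctionalFor α ∅
  | union {a b : RGX Sig} {V : Finset ℕ} (ha : FunctionalFor a V) (hb : FunctionalFor b V) :
      FunctionalFor (.union a b) V
  | concat {a b : RGX Sig} {V : Finset ℕ} (V1 : Finset ℕ) (hsub : V1 ⊆ V)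
      (ha : FunctionalFor a V1) (hb : FunctionalFor b (V \ V1)) :
      FunctionalFor (.concat a b) V
  | star {a : RGX Sig} (h : FunctionalFor a ∅) : FunctionalFor (.star a) ∅
  | bind {x : ℕ} {a : RGX Sig} {V : Finset ℕ} (h : FunctionalFor a (V.erase x)) :
      FunctionalFor (.bind x a) V

def RGX.Functional (α : RGX Sig) : Prop := FunctionalFor α α.vars

/-- Disjunctive functional regex formulas: finite disjunctions of functional regex formulas. -/
inductive DisjFunctional : RGX Sig → Prop where
  | base {γ : RGX Sig} (h : γ.Functional) : DisjFunctional γ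
  | union {a b : RGX Sig} (ha : DisjFunctional a) (hb : DisjFunctional b) :
      DisjFunctional (.union a b)

/-- Number of disjuncts of a (disjunctive) regex formula. -/
def countDisjuncts : RGX Sig → ℕ
  | .union a b => countDisjuncts a + countDisjuncts b
  | _ => 1

/-- Disjunction-free regex formulas. -/
def RGX.DisjFree : RGX Sig → Prop
  | .union _ _ => False
  | .concat a b => a.DisjFree ∧ b.DisjFree
  | .star a => a.DisjFree
  | .bind _ a => a.DisjFree
  | _ => True

/-- `γ` is synchronized for `x`: no subformula `γ1 ∨ γ2` contains `x`. -/
def RGX.SyncFor : RGX Sig → ℕ → Prop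
  | .union a b, x => (x ∉ a.vars ∧ x ∉ b.vars) ∧ a.SyncFor x ∧ b.SyncFor x
  | .concat a b, x => a.SyncFor x ∧ b.SyncFor x
  | .star a, x => a.SyncFor x
  | .bind _ a, x => a.SyncFor x
  | _, _ => True

/-- Concatenation of a list of regex formulas. -/
def concatList : List (RGX Sig) → RGX Sig
  | [] => .eps
  | [α] => α
  | α :: rest => .concat α (concatList rest)

/-- Disjunction of a list of regex formulas. -/
def disjList : List (RGX Sig) → RGX Sig
  | [] => .empty
  | [α] => α
  | α :: rest => .union α (disjList rest)

/-! ### vset-automata -/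

inductive VLabel (Sig : Type) where
  | eps : VLabel Sig
  | letter : Sig → VLabel Sig
  | openv : ℕ → VLabel Sig
  | closev : ℕ → VLabel Sig
deriving DecidableEq

structure VA (Sig : Type) [DecidableEq Sig] where
  q0 : ℕ
  F : Finset ℕ
  δ : Finset (ℕ × VLabel Sig × ℕ)

variable [DecidableEq Sig]

/-- The states of a VA: the initial state and all states mentioned in `F` or in transitions. -/
def statesOf (A : VA Sig) : Finset ℕ :=
  insert A.q0 (A.F ∪ A.δ.image (fun t => t.1) ∪ A.δ.image (fun t => t.2.2))

def labelVars : VLabel Sig → Finset ℕ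
  | .openv x => {x}
  | .closev x => {x}
  | _ => ∅

/-- `Vars(A)`: the variables mentioned in the transitions of `A`. -/
def varsOf (A : VA Sig) : Finset ℕ := A.δ.biUnion (fun t => labelVars t.2.1)

/-- Total size of a VA: number of states plus number of transitions. -/
def vaSize (A : VA Sig) : ℕ := (statesOf A).card + A.δ.card

/-- `A.PathFrom p ls q`: a path (run segment) from `p` to `q` with label sequence `ls`. -/
inductive VA.PathFrom (A : VA Sig) : ℕ → List (VLabel Sig) → ℕ → Prop where
  | nil (q : ℕ) : VA.PathFrom A q [] q
  | cons {p q r : ℕ} {l : VLabel Sig} {ls : List (VLabel Sig)}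
      (h : (p, l, q) ∈ A.δ) (htail : VA.PathFrom A q ls r) : VA.PathFrom A p (l :: ls) r

/-- The word (document) read by a sequence of labels. -/
def readWord : List (VLabel Sig) → List Sig :=
  List.filterMap fun l => match l with
    | VLabel.letter σ => some σ
    | _ => none

def isLetterL : VLabel Sig → Bool
  | .letter _ => true
  | _ => false

/-- The current position in the document just before executing the `k`-th label. -/
def posAt (ls : List (VLabel Sig)) (k : ℕ) : ℕ := 1 + (ls.take k).countP isLetterL

/-- Validity of a run, given by its label sequence. -/
def ValidLabels (ls : List (VLabel Sig)) : Prop :=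
  ∀ x : ℕ,
    ls.count (VLabel.openv x) ≤ 1 ∧
    ls.count (VLabel.closev x) ≤ 1 ∧
    ((VLabel.openv x) ∈ ls ↔ (VLabel.closev x) ∈ ls) ∧
    ∀ i j : ℕ, ls[i]? = some (VLabel.openv x) → ls[j]? = some (VLabel.closev x) →
      posAt ls i ≤ posAt ls j

/-- The mapping `μ_ρ` extracted from a (valid accepting) run with label sequence `ls`. -/
def runMapping (ls : List (VLabel Sig)) : VMapping := fun x =>
  if (VLabel.openv x) ∈ ls then
    some (posAt ls (ls.idxOf (VLabel.openv x)), posAt ls (ls.idxOf (VLabel.closev x)))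
  else none

/-- `ls` is the label sequence of an accepting run of `A`. -/
def AcceptsWith (A : VA Sig) (ls : List (VLabel Sig)) : Prop :=
  ∃ qf, VA.PathFrom A A.q0 ls qf ∧ qf ∈ A.F

/-- `⟦A⟧(d)`. -/
def vaSem (A : VA Sig) (d : List Sig) : Set VMapping :=
  {μ | ∃ ls, AcceptsWith A ls ∧ readWord ls = d ∧ ValidLabels ls ∧ μ = runMapping ls}

/-- A VA is sequential if all of its accepting runs are valid. -/
def VA.Sequential (A : VA Sig) : Prop := ∀ ls, AcceptsWith A ls → ValidLabels ls

/-- A run from the initial state to `q` that is a prefix of an accepting run. -/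
def PrefixRun (A : VA Sig) (ls : List (VLabel Sig)) (q : ℕ) : Prop :=
  VA.PathFrom A A.q0 ls q ∧ ∃ ls' qf, VA.PathFrom A q ls' qf ∧ qf ∈ A.F

/-- `A` is semi-functional for the variable `x`: no state has extended configuration `d`. -/
def SemiFunctionalFor (A : VA Sig) (x : ℕ) : Prop :=
  ¬ ∃ q ls1 ls2, PrefixRun A ls1 q ∧ PrefixRun A ls2 q ∧
      (VLabel.closev x) ∈ ls1 ∧ (VLabel.openv x) ∉ ls2

def SemiFunctionalForSet (A : VA Sig) (X : Finset ℕ) : Prop :=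
  ∀ x ∈ X, SemiFunctionalFor A x

/-- Functional VA: sequential, and every accepting run opens and closes every variable. -/
def FunctionalVA (A : VA Sig) : Prop :=
  A.Sequential ∧ ∀ ls, AcceptsWith A ls → ∀ x ∈ varsOf A,
    (VLabel.openv x) ∈ ls ∧ (VLabel.closev x) ∈ ls

/-- `l` has a unique target state in `A`. -/
def UniqueTarget (A : VA Sig) (l : VLabel Sig) : Prop :=
  ∃ qt : ℕ, ∀ p q : ℕ, (p, l, q) ∈ A.δ → q = qt

/-- `A` is synchronized for the variable `x`. -/
def SyncForVA (A : VA Sig) (x : ℕ) : Prop :=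
  UniqueTarget A (VLabel.openv x) ∧ UniqueTarget A (VLabel.closev x) ∧
    ((∀ ls, AcceptsWith A ls → (VLabel.openv x) ∈ ls ∧ (VLabel.closev x) ∈ ls) ∨
     (∀ ls, AcceptsWith A ls → (VLabel.openv x) ∉ ls ∧ (VLabel.closev x) ∉ ls))

/-- `A` is the disjunctive functional VA with functional components `parts`. -/
def DisjFunctionalVAWith (A : VA Sig) (parts : List (VA Sig)) : Prop :=
  (∀ B ∈ parts, FunctionalVA B) ∧
  (parts.Pairwise fun B C => Disjoint (statesOf B) (statesOf C)) ∧
  (∀ B ∈ parts, A.q0 ∉ statesOf B) ∧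
  A.F = parts.foldr (fun B s => B.F ∪ s) (∅ : Finset ℕ) ∧
  A.δ = (parts.map (fun B => (A.q0, (VLabel.eps : VLabel Sig), B.q0))).toFinset
        ∪ parts.foldr (fun B s => B.δ ∪ s) (∅ : Finset (ℕ × VLabel Sig × ℕ))

def DisjFunctionalVA (A : VA Sig) : Prop := ∃ parts, DisjFunctionalVAWith A parts

/-! ### 3CNF formulas -/

/-- A 3CNF clause over `n` Boolean variables: a triple of literals; `(i, true)` is `xᵢ`,
`(i, false)` is `¬xᵢ`. -/
def Clause3 (n : ℕ) : Type := (Fin n × Bool) × (Fin n × Bool) × (Fin n × Bool)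

def litsOf {n : ℕ} (c : Clause3 n) : List (Fin n × Bool) := [c.1, c.2.1, c.2.2]

def clauseSat {n : ℕ} (τ : Fin n → Bool) (c : Clause3 n) : Prop :=
  ∃ l ∈ litsOf c, τ l.1 = l.2

def Sat3 {n m : ℕ} (φ : Fin m → Clause3 n) : Prop :=
  ∃ τ : Fin n → Bool, ∀ j, clauseSat τ (φ j)

end Spanners

namespace Spanners

variable {Sig : Type} [DecidableEq Sig]

/-! ### Part 1: occurrence machinery -/

def posEnd (ls : List (VLabel Sig)) : ℕ := 1 + ls.countP isLetterL

def occs : List (VLabel Sig) → VLabel Sig → List ℕ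
  | [], _ => []
  | a :: t, l =>
      (if a = l then [1] else []) ++ (occs t l).map (· + if isLetterL a then 1 else 0)

@[simp] theorem occs_nil (l : VLabel Sig) : occs [] l = [] := rfl

theorem occs_cons (a l : VLabel Sig) (t : List (VLabel Sig)) :
    occs (a :: t) l =
      (if a = l then [1] else []) ++ (occs t l).map (· + if isLetterL a then 1 else 0) := rfl

theorem occs_length (ls : List (VLabel Sig)) (l : VLabel Sig) :
    (occs ls l).length = ls.count l := by
  induction ls with
  | nil => simp
  | cons a t ih =>
    rw [occs_cons, List.count_cons]
    by_cases h : a = l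
    · subst h; simp [ih]
    · simp [h, ih, beq_false_of_ne h]

theorem mem_occs {ls : List (VLabel Sig)} {l : VLabel Sig} {p : ℕ} :
    p ∈ occs ls l ↔ ∃ i, ls[i]? = some l ∧ posAt ls i = p := by
  induction ls generalizing p with
  | nil => simp
  | cons a t ih =>
    rw [occs_cons]
    constructor
    · intro hp
      rcases List.mem_append.1 hp with h | h
      · refine ⟨0, ?_, ?_⟩
        · by_cases hal : a = l
          · simp [hal]
          · simp [hal] at h
        · by_cases hal : a = l
          · simp [hal] at h
            simp [posAt, ← h]
          · simp [hal] at h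
      · rcases List.mem_map.1 h with ⟨q, hq, hqe⟩
        rcases ih.1 hq with ⟨i, hi, hpos⟩
        refine ⟨i + 1, by simpa using hi, ?_⟩
        simp only [posAt] at hpos ⊢
        rw [List.take_succ_cons, List.countP_cons]
        omega
    · rintro ⟨i, hi, hpos⟩
      match i with
      | 0 =>
        simp at hi
        subst hi
        simp [posAt] at hpos
        simp [← hpos]
      | (i+1) =>
        simp at hi
        apply List.mem_append.2
        right
        apply List.mem_map.2
        refine ⟨posAt t i, ih.2 ⟨i, hi, rfl⟩, ?_⟩
        simp only [posAt] at hpos ⊢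
        rw [← hpos, List.take_succ_cons, List.countP_cons]
        omega

theorem occs_head {ls : List (VLabel Sig)} {l : VLabel Sig} (h : l ∈ ls) :
    (occs ls l).head? = some (posAt ls (ls.idxOf l)) := by
  induction ls with
  | nil => simp at h
  | cons a t ih =>
    by_cases hal : a = l
    · subst hal
      rw [occs_cons]
      simp [posAt, List.idxOf_cons_self]
    · have hl : l ∈ t := by
        rcases List.mem_cons.1 h with h' | h' 
        · exact absurd h'.symm hal
        · exact h'
      rw [occs_cons, if_neg hal]
      rw [List.idxOf_cons_ne _ (fun he => hal (by simpa using he))]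
      simp only [List.nil_append, List.head?_map, ih hl, Option.map_some]
      congr 1
      simp only [posAt, List.take_succ_cons, List.countP_cons]
      omega

theorem occs_ne_nil_iff {ls : List (VLabel Sig)} {l : VLabel Sig} :
    occs ls l ≠ [] ↔ l ∈ ls := by
  rw [← List.length_pos_iff_ne_nil, occs_length, List.count_pos_iff]

theorem occs_append (u v : List (VLabel Sig)) (l : VLabel Sig) :
    occs (u ++ v) l = occs u l ++ (occs v l).map (· + u.countP isLetterL) := by
  induction u with
  | nil => simp
  | cons a t ih =>
    rw [List.cons_append, occs_cons, occs_cons, ih]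
    simp only [List.map_append, List.map_map, List.append_assoc, List.countP_cons]
    congr 2
    apply List.map_congr_left
    intro q hq
    simp only [Function.comp_apply]
    by_cases ha : isLetterL a <;> simp [ha] <;> omega

/-- Validity condition for a single variable, phrased via occurrence lists. -/
def OccValid (o cl : List ℕ) : Prop :=
  o.length ≤ 1 ∧ cl.length ≤ 1 ∧ (o = [] ↔ cl = []) ∧ ∀ a ∈ o, ∀ b ∈ cl, a ≤ b

theorem validLabels_iff {ls : List (VLabel Sig)} :
    ValidLabels ls ↔ ∀ x, OccValid (occs ls (.openv x)) (occs ls (.closev x)) := by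
  constructor
  · intro h x
    rcases h x with ⟨h1, h2, h3, h4⟩
    refine ⟨by rw [occs_length]; exact h1, by rw [occs_length]; exact h2, ?_, ?_⟩
    · constructor <;> intro he
      · by_contra hne
        exact occs_ne_nil_iff.2 (h3.2 (occs_ne_nil_iff.1 hne)) he
      · by_contra hne
        exact occs_ne_nil_iff.2 (h3.1 (occs_ne_nil_iff.1 hne)) he
    · intro a ha b hb
      rcases mem_occs.1 ha with ⟨i, hi, hpi⟩
      rcases mem_occs.1 hb with ⟨j, hj, hpj⟩
      rw [← hpi, ← hpj]
      exact h4 i j hi hj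
  · intro h x
    rcases h x with ⟨h1, h2, h3, h4⟩
    refine ⟨by rw [← occs_length]; exact h1, by rw [← occs_length]; exact h2, ?_, ?_⟩
    · constructor <;> intro hm
      · have ho := occs_ne_nil_iff.2 hm
        apply occs_ne_nil_iff.1
        intro he
        exact ho (h3.2 he)
      · have hc := occs_ne_nil_iff.2 hm
        apply occs_ne_nil_iff.1
        intro he
        exact hc (h3.1 he)
    · intro i j hi hj
      exact h4 _ (mem_occs.2 ⟨i, hi, rfl⟩) _ (mem_occs.2 ⟨j, hj, rfl⟩)

theorem runMapping_eq_none {ls : List (VLabel Sig)} {x : ℕ}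
    (h : occs ls (.openv x) = []) : runMapping ls x = none := by
  have : (VLabel.openv x : VLabel Sig) ∉ ls := fun hm => (occs_ne_nil_iff.2 hm) h
  simp [runMapping, this]

theorem runMapping_eq_some {ls : List (VLabel Sig)} {x : ℕ} {a b : ℕ} {o' c' : List ℕ}
    (ho : occs ls (.openv x) = a :: o') (hc : occs ls (.closev x) = b :: c') :
    runMapping ls x = some (a, b) := by
  have hmo : (VLabel.openv x : VLabel Sig) ∈ ls := occs_ne_nil_iff.1 (by rw [ho]; simp)
  have hmc : (VLabel.closev x : VLabel Sig) ∈ ls := occs_ne_nil_iff.1 (by rw [hc]; simp)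
  have h1 := occs_head hmo
  have h2 := occs_head hmc
  rw [ho] at h1; rw [hc] at h2
  simp at h1 h2
  simp [runMapping, hmo, ← h1, ← h2]

/-! ### Part 2: the product construction -/

theorem posEnd_snoc (ls : List (VLabel Sig)) (l : VLabel Sig) :
    posEnd (ls ++ [l]) = posEnd ls + (if isLetterL l then 1 else 0) := by
  simp only [posEnd, List.countP_append, List.countP_cons, List.countP_nil]
  by_cases h : isLetterL l <;> simp [h] <;> omega

theorem occs_snoc (ls : List (VLabel Sig)) (l lab : VLabel Sig) :
    occs (ls ++ [l]) lab = occs ls lab ++ (if l = lab then [posEnd ls] else []) := by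
  rw [occs_append]
  congr 1
  by_cases h : l = lab
  · simp [occs_cons, h, posEnd]
    try omega
  · simp [occs_cons, h]

abbrev St : Type := ((Bool × Bool) × (Bool × Bool)) ⊕ Bool

def st0 : St := Sum.inl ((false, false), (false, false))

def SyncSt : St → Prop
  | Sum.inl (s1, s2) => s1 = s2
  | Sum.inr _ => True

def isOpOf (l : VLabel Sig) (x : ℕ) : Prop := l = .openv x ∨ l = .closev x

section Product

variable (A1 A2 : VA Sig)

abbrev ComVars : Finset ℕ := varsOf A1 ∩ varsOf A2

abbrev Cfg : Type := {x // x ∈ ComVars A1 A2} → St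

def cfg0 : Cfg A1 A2 := fun _ => st0

/-- One synchronized step of the product construction.  The merged run emits label `l`,
while components 1 and 2 execute the label sequences `w1` and `w2` (each `[]` or a
singleton). -/
inductive PStep :
    Cfg A1 A2 → ℕ → ℕ → VLabel Sig → List (VLabel Sig) → List (VLabel Sig) →
    Cfg A1 A2 → ℕ → ℕ → Prop where
  | free1 {c q1 q2 q1' l} (h : (q1, l, q1') ∈ A1.δ) (hl : isLetterL l = false)
      (hv : ∀ x ∈ labelVars l, x ∉ ComVars A1 A2) :
      PStep c q1 q2 l [l] [] c q1' q2
  | free2 {c q1 q2 q2' l} (h : (q2, l, q2') ∈ A2.δ) (hl : isLetterL l = false)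
      (hv : ∀ x ∈ labelVars l, x ∉ ComVars A1 A2) :
      PStep c q1 q2 l [] [l] c q1 q2'
  | letter {c q1 q2 q1' q2' σ} (h1 : (q1, .letter σ, q1') ∈ A1.δ)
      (h2 : (q2, .letter σ, q2') ∈ A2.δ) (hs : ∀ x, SyncSt (c x)) :
      PStep c q1 q2 (.letter σ) [.letter σ] [.letter σ] c q1' q2'
  | open1 {c q1 q2 q1'} {x : ℕ} (hx : x ∈ ComVars A1 A2) {pc1 : Bool} {s2 : Bool × Bool}
      (hc : c ⟨x, hx⟩ = Sum.inl ((false, pc1), s2)) (h : (q1, .openv x, q1') ∈ A1.δ) :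
      PStep c q1 q2 (if s2.1 then .eps else .openv x) [.openv x] []
        (Function.update c ⟨x, hx⟩ (Sum.inl ((true, pc1), s2))) q1' q2
  | close1 {c q1 q2 q1'} {x : ℕ} (hx : x ∈ ComVars A1 A2) {po1 : Bool} {s2 : Bool × Bool}
      (hc : c ⟨x, hx⟩ = Sum.inl ((po1, false), s2)) (h : (q1, .closev x, q1') ∈ A1.δ) :
      PStep c q1 q2 (if s2.2 then .eps else .closev x) [.closev x] []
        (Function.update c ⟨x, hx⟩ (Sum.inl ((po1, true), s2))) q1' q2
  | excl1enter {c q1 q2 q1' l} {x : ℕ} (hx : x ∈ ComVars A1 A2) {s1 : Bool × Bool}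
      (hc : c ⟨x, hx⟩ = Sum.inl (s1, (false, false))) (hop : isOpOf l x)
      (h : (q1, l, q1') ∈ A1.δ) :
      PStep c q1 q2 l [l] [] (Function.update c ⟨x, hx⟩ (Sum.inr true)) q1' q2
  | excl1op {c q1 q2 q1' l} {x : ℕ} (hx : x ∈ ComVars A1 A2)
      (hc : c ⟨x, hx⟩ = Sum.inr true) (hop : isOpOf l x) (h : (q1, l, q1') ∈ A1.δ) :
      PStep c q1 q2 l [l] [] c q1' q2
  | open2 {c q1 q2 q2'} {x : ℕ} (hx : x ∈ ComVars A1 A2) {pc2 : Bool} {s1 : Bool × Bool}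
      (hc : c ⟨x, hx⟩ = Sum.inl (s1, (false, pc2))) (h : (q2, .openv x, q2') ∈ A2.δ) :
      PStep c q1 q2 (if s1.1 then .eps else .openv x) [] [.openv x]
        (Function.update c ⟨x, hx⟩ (Sum.inl (s1, (true, pc2)))) q1 q2'
  | close2 {c q1 q2 q2'} {x : ℕ} (hx : x ∈ ComVars A1 A2) {po2 : Bool} {s1 : Bool × Bool}
      (hc : c ⟨x, hx⟩ = Sum.inl (s1, (po2, false))) (h : (q2, .closev x, q2') ∈ A2.δ) :
      PStep c q1 q2 (if s1.2 then .eps else .closev x) [] [.closev x]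
        (Function.update c ⟨x, hx⟩ (Sum.inl (s1, (po2, true)))) q1 q2'
  | excl2enter {c q1 q2 q2' l} {x : ℕ} (hx : x ∈ ComVars A1 A2) {s2 : Bool × Bool}
      (hc : c ⟨x, hx⟩ = Sum.inl ((false, false), s2)) (hop : isOpOf l x)
      (h : (q2, l, q2') ∈ A2.δ) :
      PStep c q1 q2 l [] [l] (Function.update c ⟨x, hx⟩ (Sum.inr false)) q1 q2'
  | excl2op {c q1 q2 q2' l} {x : ℕ} (hx : x ∈ ComVars A1 A2)
      (hc : c ⟨x, hx⟩ = Sum.inr false) (hop : isOpOf l x) (h : (q2, l, q2') ∈ A2.δ) :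
      PStep c q1 q2 l [] [l] c q1 q2'

/-- A synchronized (merged) run of the product construction. -/
inductive MRun :
    Cfg A1 A2 → ℕ → ℕ → List (VLabel Sig) → List (VLabel Sig) → List (VLabel Sig) →
    Cfg A1 A2 → ℕ → ℕ → Prop where
  | nil (c q1 q2) : MRun c q1 q2 [] [] [] c q1 q2
  | snoc {c q1 q2 ls1 ls2 ls c' q1' q2' l w1 w2 c'' q1'' q2''}
      (hr : MRun c q1 q2 ls1 ls2 ls c' q1' q2')
      (hs : PStep A1 A2 c' q1' q2' l w1 w2 c'' q1'' q2'') :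
      MRun c q1 q2 (ls1 ++ w1) (ls2 ++ w2) (ls ++ [l]) c'' q1'' q2''

variable {A1 A2}

theorem MRun.cons {c q1 q2 l w1 w2 c' q1' q2' ls1 ls2 ls c'' q1'' q2''}
    (hs : PStep A1 A2 c q1 q2 l w1 w2 c' q1' q2')
    (hr : MRun A1 A2 c' q1' q2' ls1 ls2 ls c'' q1'' q2'') :
    MRun A1 A2 c q1 q2 (w1 ++ ls1) (w2 ++ ls2) (l :: ls) c'' q1'' q2'' := by
  induction hr with
  | nil =>
    have := MRun.snoc (MRun.nil _ _ _) hs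
    simpa using this
  | snoc hr' hs' ih =>
    have := MRun.snoc ih hs'
    simpa [List.append_assoc] using this

theorem VA.PathFrom.append {A : VA Sig} {p q r : ℕ} {u v : List (VLabel Sig)}
    (h1 : VA.PathFrom A p u q) (h2 : VA.PathFrom A q v r) : VA.PathFrom A p (u ++ v) r := by
  induction h1 with
  | nil => simpa
  | cons h htail ih => exact VA.PathFrom.cons h (ih h2)

theorem VA.PathFrom.single {A : VA Sig} {p q : ℕ} {l : VLabel Sig} (h : (p, l, q) ∈ A.δ) :
    VA.PathFrom A p [l] q := VA.PathFrom.cons h (VA.PathFrom.nil q)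

theorem PStep.path1 {c q1 q2 l w1 w2 c' q1' q2'}
    (hs : PStep A1 A2 c q1 q2 l w1 w2 c' q1' q2') : VA.PathFrom A1 q1 w1 q1' := by
  cases hs <;> first
    | exact VA.PathFrom.nil _
    | (apply VA.PathFrom.single; assumption)

theorem PStep.path2 {c q1 q2 l w1 w2 c' q1' q2'}
    (hs : PStep A1 A2 c q1 q2 l w1 w2 c' q1' q2') : VA.PathFrom A2 q2 w2 q2' := by
  cases hs <;> first
    | exact VA.PathFrom.nil _
    | (apply VA.PathFrom.single; assumption)

theorem MRun.path1 {c q1 q2 ls1 ls2 ls c' q1' q2'}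
    (h : MRun A1 A2 c q1 q2 ls1 ls2 ls c' q1' q2') : VA.PathFrom A1 q1 ls1 q1' := by
  induction h with
  | nil => exact VA.PathFrom.nil _
  | snoc hr hs ih => exact ih.append hs.path1

theorem MRun.path2 {c q1 q2 ls1 ls2 ls c' q1' q2'}
    (h : MRun A1 A2 c q1 q2 ls1 ls2 ls c' q1' q2') : VA.PathFrom A2 q2 ls2 q2' := by
  induction h with
  | nil => exact VA.PathFrom.nil _
  | snoc hr hs ih => exact ih.append hs.path2

end Product

/-! ### Part 3: the run invariant -/

@[simp] theorem readWord_nil : readWord ([] : List (VLabel Sig)) = [] := rfl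

theorem readWord_append (u v : List (VLabel Sig)) :
    readWord (u ++ v) = readWord u ++ readWord v := by
  simp [readWord]

theorem readWord_single_nonletter {l : VLabel Sig} (h : isLetterL l = false) :
    readWord [l] = [] := by
  cases l <;> simp_all [readWord, isLetterL]

theorem readWord_single_letter (σ : Sig) : readWord [VLabel.letter σ] = [σ] := by
  simp [readWord]

theorem countP_isLetter (ls : List (VLabel Sig)) :
    ls.countP isLetterL = (readWord ls).length := by
  induction ls with
  | nil => simp [readWord]
  | cons a t ih =>
    rw [List.countP_cons]
    cases a <;> simp [readWord, isLetterL, List.filterMap_cons] at ih ⊢ <;> omega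

theorem posEnd_eq_of_readWord {u v : List (VLabel Sig)} (h : readWord u = readWord v) :
    posEnd u = posEnd v := by
  simp [posEnd, countP_isLetter, h]

theorem label_vars_mem {A : VA Sig} {q q' : ℕ} {l : VLabel Sig} (h : (q, l, q') ∈ A.δ) :
    ∀ x ∈ labelVars l, x ∈ varsOf A := by
  intro x hx
  exact Finset.mem_biUnion.2 ⟨(q, l, q'), h, hx⟩

theorem occs_snoc_ne {l lab : VLabel Sig} (h : l ≠ lab) (u : List (VLabel Sig)) :
    occs (u ++ [l]) lab = occs u lab := by
  rw [occs_snoc, if_neg h]; simp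

theorem occs_snoc_self (u : List (VLabel Sig)) (l : VLabel Sig) :
    occs (u ++ [l]) l = occs u l ++ [posEnd u] := by
  rw [occs_snoc, if_pos rfl]

theorem posEnd_snoc_nonletter {l : VLabel Sig} (h : isLetterL l = false)
    (u : List (VLabel Sig)) : posEnd (u ++ [l]) = posEnd u := by
  rw [posEnd_snoc, h]; rfl

theorem posEnd_snoc_letter (σ : Sig) (u : List (VLabel Sig)) :
    posEnd (u ++ [VLabel.letter σ]) = posEnd u + 1 := by
  rw [posEnd_snoc]; simp [isLetterL]

def cnd (b : Bool) (v : ℕ) : List ℕ := if b then [v] else []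

@[simp] theorem cnd_false (v : ℕ) : cnd false v = [] := rfl
@[simp] theorem cnd_true (v : ℕ) : cnd true v = [v] := rfl

/-- Invariant for a single common variable, relating its status to the occurrence
lists in the two component runs and the merged run.  `E` is the current position. -/
def StInv (s : St) (o1 cl1 o2 cl2 o cl : List ℕ) (E : ℕ) : Prop :=
  match s with
  | Sum.inl ((po1, pc1), (po2, pc2)) => ∃ a b,
      o1 = cnd po1 a ∧ cl1 = cnd pc1 b ∧ o2 = cnd po2 a ∧ cl2 = cnd pc2 b ∧
      o = cnd (po1 || po2) a ∧ cl = cnd (pc1 || pc2) b ∧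
      (po1 ≠ po2 → a = E) ∧ (pc1 ≠ pc2 → b = E)
  | Sum.inr true => o2 = [] ∧ cl2 = [] ∧ o = o1 ∧ cl = cl1
  | Sum.inr false => o1 = [] ∧ cl1 = [] ∧ o = o2 ∧ cl = cl2

section Product

variable {A1 A2 : VA Sig}

/-- The global invariant of merged runs. -/
def GInv (A1 A2 : VA Sig) (c : Cfg A1 A2) (ls1 ls2 ls : List (VLabel Sig)) : Prop :=
  readWord ls1 = readWord ls ∧ readWord ls2 = readWord ls ∧
  (∀ x (hx : x ∈ ComVars A1 A2), StInv (c ⟨x, hx⟩)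
      (occs ls1 (.openv x)) (occs ls1 (.closev x))
      (occs ls2 (.openv x)) (occs ls2 (.closev x))
      (occs ls (.openv x)) (occs ls (.closev x)) (posEnd ls)) ∧
  (∀ x, x ∉ varsOf A2 →
      occs ls (.openv x) = occs ls1 (.openv x) ∧ occs ls (.closev x) = occs ls1 (.closev x)) ∧
  (∀ x, x ∉ varsOf A1 →
      occs ls (.openv x) = occs ls2 (.openv x) ∧ occs ls (.closev x) = occs ls2 (.closev x))

theorem ginv_nil : GInv A1 A2 (cfg0 A1 A2) [] [] [] := by
  refine ⟨rfl, rfl, ?_, ?_, ?_⟩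
  · intro x hx
    exact ⟨0, 0, by simp [cfg0, st0, StInv]⟩
  · intro x _; exact ⟨rfl, rfl⟩
  · intro x _; exact ⟨rfl, rfl⟩

theorem ginv_step {c : Cfg A1 A2} {q1 q2 : ℕ} {l : VLabel Sig} {w1 w2 : List (VLabel Sig)}
    {c' : Cfg A1 A2} {q1' q2' : ℕ} {ls1 ls2 ls : List (VLabel Sig)}
    (hg : GInv A1 A2 c ls1 ls2 ls) (hs : PStep A1 A2 c q1 q2 l w1 w2 c' q1' q2') :
    GInv A1 A2 c' (ls1 ++ w1) (ls2 ++ w2) (ls ++ [l]) := by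
  obtain ⟨hr1, hr2, hK, hn2, hn1⟩ := hg
  have hpe1 : posEnd ls1 = posEnd ls := posEnd_eq_of_readWord hr1
  have hpe2 : posEnd ls2 = posEnd ls := posEnd_eq_of_readWord hr2
  cases hs with
  | free1 h hl hv =>
    rename_i l
    try simp only [List.append_nil]
    refine ⟨?_, ?_, ?_, ?_, ?_⟩
    · simp [readWord_append, readWord_single_nonletter hl, hr1]
    · simp [readWord_append, readWord_single_nonletter hl, hr2]
    · intro x hx
      have hlx1 : l ≠ .openv x := by rintro rfl; exact hv x (by simp [labelVars]) hx
      have hlx2 : l ≠ .closev x := by rintro rfl; exact hv x (by simp [labelVars]) hx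
      rw [posEnd_snoc_nonletter hl, occs_snoc_ne hlx1, occs_snoc_ne hlx2,
        occs_snoc_ne hlx1, occs_snoc_ne hlx2]
      exact hK x hx
    · intro x hx2
      rcases hn2 x hx2 with ⟨e1, e2⟩
      refine ⟨?_, ?_⟩
      · rw [occs_snoc, occs_snoc, hpe1, e1]
      · rw [occs_snoc, occs_snoc, hpe1, e2]
    · intro x hx1
      have hlx1 : l ≠ .openv x := by
        rintro rfl; exact hx1 (label_vars_mem h x (by simp [labelVars]))
      have hlx2 : l ≠ .closev x := by
        rintro rfl; exact hx1 (label_vars_mem h x (by simp [labelVars]))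
      rcases hn1 x hx1 with ⟨e1, e2⟩
      rw [occs_snoc_ne hlx1, occs_snoc_ne hlx2]
      exact ⟨e1, e2⟩
  | free2 h hl hv =>
    rename_i l
    try simp only [List.append_nil]
    refine ⟨?_, ?_, ?_, ?_, ?_⟩
    · simp [readWord_append, readWord_single_nonletter hl, hr1]
    · simp [readWord_append, readWord_single_nonletter hl, hr2]
    · intro x hx
      have hlx1 : l ≠ .openv x := by rintro rfl; exact hv x (by simp [labelVars]) hx
      have hlx2 : l ≠ .closev x := by rintro rfl; exact hv x (by simp [labelVars]) hx
      rw [posEnd_snoc_nonletter hl, occs_snoc_ne hlx1, occs_snoc_ne hlx2,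
        occs_snoc_ne hlx1, occs_snoc_ne hlx2]
      exact hK x hx
    · intro x hx2
      have hlx1 : l ≠ .openv x := by
        rintro rfl; exact hx2 (label_vars_mem h x (by simp [labelVars]))
      have hlx2 : l ≠ .closev x := by
        rintro rfl; exact hx2 (label_vars_mem h x (by simp [labelVars]))
      rcases hn2 x hx2 with ⟨e1, e2⟩
      rw [occs_snoc_ne hlx1, occs_snoc_ne hlx2]
      exact ⟨e1, e2⟩
    · intro x hx1
      rcases hn1 x hx1 with ⟨e1, e2⟩
      refine ⟨?_, ?_⟩
      · rw [occs_snoc, occs_snoc, hpe2, e1]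
      · rw [occs_snoc, occs_snoc, hpe2, e2]
  | letter h1 h2 hsy =>
    rename_i σ
    try simp only [List.append_nil]
    refine ⟨?_, ?_, ?_, ?_, ?_⟩
    · rw [readWord_append, readWord_append, readWord_single_letter, hr1]
    · rw [readWord_append, readWord_append, readWord_single_letter, hr2]
    · intro x hx
      have hK' := hK x hx
      have hne1 : (VLabel.letter σ : VLabel Sig) ≠ .openv x := by simp
      have hne2 : (VLabel.letter σ : VLabel Sig) ≠ .closev x := by simp
      rw [occs_snoc_ne hne1, occs_snoc_ne hne2, occs_snoc_ne hne1, occs_snoc_ne hne2,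
        occs_snoc_ne hne1, occs_snoc_ne hne2, posEnd_snoc_letter]
      have hsx := hsy ⟨x, hx⟩
      cases hcx : c ⟨x, hx⟩ with
      | inl s =>
        obtain ⟨⟨po1, pc1⟩, po2, pc2⟩ := s
        rw [hcx] at hK' hsx
        simp only [SyncSt] at hsx
        have hpo : po1 = po2 := by
          have := congrArg Prod.fst hsx; simpa using this
        have hpc : pc1 = pc2 := by
          have := congrArg Prod.snd hsx; simpa using this
        obtain ⟨a, b, e1, e2, e3, e4, e5, e6, _, _⟩ := hK'
        exact ⟨a, b, e1, e2, e3, e4, e5, e6, by simp [hpo], by simp [hpc]⟩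
      | inr bb =>
        rw [hcx] at hK'
        cases bb <;> simpa [StInv] using hK'
    · intro x hx2
      rcases hn2 x hx2 with ⟨e1, e2⟩
      have hne1 : (VLabel.letter σ : VLabel Sig) ≠ .openv x := by simp
      have hne2 : (VLabel.letter σ : VLabel Sig) ≠ .closev x := by simp
      rw [occs_snoc_ne hne1, occs_snoc_ne hne2, occs_snoc_ne hne1, occs_snoc_ne hne2]
      exact ⟨e1, e2⟩
    · intro x hx1
      rcases hn1 x hx1 with ⟨e1, e2⟩
      have hne1 : (VLabel.letter σ : VLabel Sig) ≠ .openv x := by simp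
      have hne2 : (VLabel.letter σ : VLabel Sig) ≠ .closev x := by simp
      rw [occs_snoc_ne hne1, occs_snoc_ne hne2, occs_snoc_ne hne1, occs_snoc_ne hne2]
      exact ⟨e1, e2⟩
  | open1 hz hc h =>
    rename_i z pcc s2
    obtain ⟨po2, pc2⟩ := s2
    have hnl : isLetterL (if po2 then (VLabel.eps : VLabel Sig) else .openv z) = false := by
      cases po2 <;> simp [isLetterL]
    have hno : ∀ y : ℕ, (if po2 then (VLabel.eps : VLabel Sig) else .openv z) = .openv y → y = z := by
      intro y hy; cases po2 <;> simp_all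
    have hnc : ∀ y : ℕ, (if po2 then (VLabel.eps : VLabel Sig) else .closev z) ≠ .closev y ∨ True := by
      intro y; right; trivial
    have hncl : ∀ y : ℕ, (if po2 then (VLabel.eps : VLabel Sig) else .openv z) ≠ .closev y := by
      intro y; cases po2 <;> simp
    try simp only [List.append_nil]
    refine ⟨?_, ?_, ?_, ?_, ?_⟩
    · simp [readWord_append, readWord_single_nonletter hnl,
        readWord_single_nonletter (show isLetterL (VLabel.openv z : VLabel Sig) = false by simp [isLetterL]), hr1]
    · simp [readWord_append, readWord_single_nonletter hnl, hr2]
    · intro x hx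
      rw [posEnd_snoc_nonletter hnl]
      by_cases hxx : x = z
      · subst hxx
        have hK' := hK x hx
        rw [hc] at hK'
        obtain ⟨a, b, e1, e2, e3, e4, e5, e6, e7, e8⟩ := hK'
        have hxeq : (⟨x, hx⟩ : {y // y ∈ ComVars A1 A2}) = ⟨x, hz⟩ := Subtype.ext rfl
        rw [hxeq, Function.update_self]
        rw [occs_snoc_self, occs_snoc_ne (show (VLabel.openv x : VLabel Sig) ≠ .closev x by simp)]
        cases po2 with
        | false =>
          simp only [Bool.false_eq_true, Bool.true_eq_false, eq_self_iff_true, if_false, if_true]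
          rw [occs_snoc_self, occs_snoc_ne (show (VLabel.openv x : VLabel Sig) ≠ .closev x by simp)]
          refine ⟨posEnd ls, b, ?_, e2, ?_, e4, ?_, ?_, fun _ => rfl, e8⟩
          · simp [e1, hpe1]
          · simp [e3]
          · simp [e5]
          · simp [e6]
        | true =>
          have ha : a = posEnd ls := e7 (by simp)
          simp only [Bool.false_eq_true, Bool.true_eq_false, eq_self_iff_true, if_false, if_true]
          rw [occs_snoc_ne (show (VLabel.eps : VLabel Sig) ≠ .openv x by simp),
            occs_snoc_ne (show (VLabel.eps : VLabel Sig) ≠ .closev x by simp)]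
          refine ⟨a, b, ?_, e2, e3, e4, ?_, ?_, ?_, e8⟩
          · simp [e1, hpe1, ha]
          · simp [e5]
          · simp [e6]
          · intro hcon; simp at hcon
      · have hK' := hK x hx
        have hupd : Function.update c ⟨z, hz⟩ (Sum.inl ((true, pcc), (po2, pc2))) ⟨x, hx⟩
            = c ⟨x, hx⟩ := by
          apply Function.update_of_ne
          simp [Subtype.ext_iff, hxx]
        have ho : (if po2 then (VLabel.eps : VLabel Sig) else .openv z) ≠ .openv x := by
          intro he; exact hxx (hno x he)
        rw [hupd, occs_snoc_ne ho, occs_snoc_ne (hncl x),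
          occs_snoc_ne (show (VLabel.openv z : VLabel Sig) ≠ .openv x by simp [Ne.symm hxx]),
          occs_snoc_ne (show (VLabel.openv z : VLabel Sig) ≠ .closev x by simp)]
        exact hK'
    · intro x hx2
      have hxx : x ≠ z := by
        rintro rfl
        exact hx2 (Finset.mem_inter.1 hz).2
      rcases hn2 x hx2 with ⟨e1, e2⟩
      have ho : (if po2 then (VLabel.eps : VLabel Sig) else .openv z) ≠ .openv x := by
        intro he; exact hxx (hno x he)
      rw [occs_snoc_ne ho, occs_snoc_ne (hncl x),
        occs_snoc_ne (show (VLabel.openv z : VLabel Sig) ≠ .openv x by simp [Ne.symm hxx]),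
        occs_snoc_ne (show (VLabel.openv z : VLabel Sig) ≠ .closev x by simp)]
      exact ⟨e1, e2⟩
    · intro x hx1
      have hxx : x ≠ z := by
        rintro rfl
        exact hx1 (Finset.mem_inter.1 hz).1
      rcases hn1 x hx1 with ⟨e1, e2⟩
      have ho : (if po2 then (VLabel.eps : VLabel Sig) else .openv z) ≠ .openv x := by
        intro he; exact hxx (hno x he)
      rw [occs_snoc_ne ho, occs_snoc_ne (hncl x)]
      exact ⟨e1, e2⟩
  | close1 hz hc h =>
    rename_i z poo s2
    obtain ⟨po2, pc2⟩ := s2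
    have hnl : isLetterL (if pc2 then (VLabel.eps : VLabel Sig) else .closev z) = false := by
      cases pc2 <;> simp [isLetterL]
    have hno : ∀ y : ℕ, (if pc2 then (VLabel.eps : VLabel Sig) else .closev z) = .closev y → y = z := by
      intro y hy; cases pc2 <;> simp_all
    have hncl : ∀ y : ℕ, (if pc2 then (VLabel.eps : VLabel Sig) else .closev z) ≠ .openv y := by
      intro y; cases pc2 <;> simp
    try simp only [List.append_nil]
    refine ⟨?_, ?_, ?_, ?_, ?_⟩
    · simp [readWord_append, readWord_single_nonletter hnl,
        readWord_single_nonletter (show isLetterL (VLabel.closev z : VLabel Sig) = false by simp [isLetterL]), hr1]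
    · simp [readWord_append, readWord_single_nonletter hnl, hr2]
    · intro x hx
      rw [posEnd_snoc_nonletter hnl]
      by_cases hxx : x = z
      · subst hxx
        have hK' := hK x hx
        rw [hc] at hK'
        obtain ⟨a, b, e1, e2, e3, e4, e5, e6, e7, e8⟩ := hK'
        have hxeq : (⟨x, hx⟩ : {y // y ∈ ComVars A1 A2}) = ⟨x, hz⟩ := Subtype.ext rfl
        rw [hxeq, Function.update_self]
        rw [occs_snoc_self, occs_snoc_ne (show (VLabel.closev x : VLabel Sig) ≠ .openv x by simp)]
        cases pc2 with
        | false =>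
          simp only [Bool.false_eq_true, Bool.true_eq_false, eq_self_iff_true, if_false, if_true]
          rw [occs_snoc_self, occs_snoc_ne (show (VLabel.closev x : VLabel Sig) ≠ .openv x by simp)]
          refine ⟨a, posEnd ls, e1, ?_, e3, ?_, ?_, ?_, e7, fun _ => rfl⟩
          · simp [e2, hpe1]
          · simp [e4]
          · simp [e5]
          · simp [e6]
        | true =>
          have hb : b = posEnd ls := e8 (by simp)
          simp only [Bool.false_eq_true, Bool.true_eq_false, eq_self_iff_true, if_false, if_true]
          rw [occs_snoc_ne (show (VLabel.eps : VLabel Sig) ≠ .openv x by simp),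
            occs_snoc_ne (show (VLabel.eps : VLabel Sig) ≠ .closev x by simp)]
          refine ⟨a, b, e1, ?_, e3, e4, ?_, ?_, e7, ?_⟩
          · simp [e2, hpe1, hb]
          · simp [e5]
          · simp [e6]
          · intro hcon; simp at hcon
      · have hK' := hK x hx
        have hupd : Function.update c ⟨z, hz⟩ (Sum.inl ((poo, true), (po2, pc2))) ⟨x, hx⟩
            = c ⟨x, hx⟩ := by
          apply Function.update_of_ne
          simp [Subtype.ext_iff, hxx]
        have ho : (if pc2 then (VLabel.eps : VLabel Sig) else .closev z) ≠ .closev x := by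
          intro he; exact hxx (hno x he)
        rw [hupd, occs_snoc_ne (hncl x), occs_snoc_ne ho,
          occs_snoc_ne (show (VLabel.closev z : VLabel Sig) ≠ .openv x by simp),
          occs_snoc_ne (show (VLabel.closev z : VLabel Sig) ≠ .closev x by simp [Ne.symm hxx])]
        exact hK'
    · intro x hx2
      have hxx : x ≠ z := by
        rintro rfl
        exact hx2 (Finset.mem_inter.1 hz).2
      rcases hn2 x hx2 with ⟨e1, e2⟩
      have ho : (if pc2 then (VLabel.eps : VLabel Sig) else .closev z) ≠ .closev x := by
        intro he; exact hxx (hno x he)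
      rw [occs_snoc_ne (hncl x), occs_snoc_ne ho,
        occs_snoc_ne (show (VLabel.closev z : VLabel Sig) ≠ .openv x by simp),
        occs_snoc_ne (show (VLabel.closev z : VLabel Sig) ≠ .closev x by simp [Ne.symm hxx])]
      exact ⟨e1, e2⟩
    · intro x hx1
      have hxx : x ≠ z := by
        rintro rfl
        exact hx1 (Finset.mem_inter.1 hz).1
      rcases hn1 x hx1 with ⟨e1, e2⟩
      have ho : (if pc2 then (VLabel.eps : VLabel Sig) else .closev z) ≠ .closev x := by
        intro he; exact hxx (hno x he)
      rw [occs_snoc_ne (hncl x), occs_snoc_ne ho]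
      exact ⟨e1, e2⟩
  | excl1enter hz hc hop h =>
    rename_i l z s1
    obtain ⟨po1, pc1⟩ := s1
    have hnl : isLetterL l = false := by
      rcases hop with rfl | rfl <;> simp [isLetterL]
    have hlv : ∀ y : ℕ, (l = .openv y ∨ l = .closev y) → y = z := by
      intro y hy
      rcases hop with rfl | rfl <;> rcases hy with hy | hy <;> simp_all
    try simp only [List.append_nil]
    refine ⟨?_, ?_, ?_, ?_, ?_⟩
    · simp [readWord_append, readWord_single_nonletter hnl, hr1]
    · simp [readWord_append, readWord_single_nonletter hnl, hr2]
    · intro x hx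
      rw [posEnd_snoc_nonletter hnl]
      by_cases hxx : x = z
      · subst hxx
        have hK' := hK x hx
        rw [hc] at hK'
        obtain ⟨a, b, e1, e2, e3, e4, e5, e6, e7, e8⟩ := hK'
        have hxeq : (⟨x, hx⟩ : {y // y ∈ ComVars A1 A2}) = ⟨x, hz⟩ := Subtype.ext rfl
        rw [hxeq, Function.update_self]
        have ho : occs ls (VLabel.openv x) = occs ls1 (VLabel.openv x) := by
          rw [e5, e1]; simp
        have hcc : occs ls (VLabel.closev x) = occs ls1 (VLabel.closev x) := by
          rw [e6, e2]; simp
        refine ⟨?_, ?_, ?_, ?_⟩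
        · simp [e3]
        · simp [e4]
        · rw [occs_snoc, occs_snoc, ho, hpe1]
        · rw [occs_snoc, occs_snoc, hcc, hpe1]
      · have hK' := hK x hx
        have hupd : Function.update c ⟨z, hz⟩ (Sum.inr true) ⟨x, hx⟩ = c ⟨x, hx⟩ := by
          apply Function.update_of_ne
          simp [Subtype.ext_iff, hxx]
        have ho1 : l ≠ .openv x := fun he => hxx (hlv x (Or.inl he))
        have ho2 : l ≠ .closev x := fun he => hxx (hlv x (Or.inr he))
        rw [hupd, occs_snoc_ne ho1, occs_snoc_ne ho2, occs_snoc_ne ho1, occs_snoc_ne ho2]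
        exact hK'
    · intro x hx2
      rcases hn2 x hx2 with ⟨e1, e2⟩
      refine ⟨?_, ?_⟩
      · rw [occs_snoc, occs_snoc, hpe1, e1]
      · rw [occs_snoc, occs_snoc, hpe1, e2]
    · intro x hx1
      have hxx : x ≠ z := by
        rintro rfl
        exact hx1 (Finset.mem_inter.1 hz).1
      rcases hn1 x hx1 with ⟨e1, e2⟩
      have ho1 : l ≠ .openv x := fun he => hxx (hlv x (Or.inl he))
      have ho2 : l ≠ .closev x := fun he => hxx (hlv x (Or.inr he))
      rw [occs_snoc_ne ho1, occs_snoc_ne ho2]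
      exact ⟨e1, e2⟩
  | excl1op hz hc hop h =>
    rename_i l z
    have hnl : isLetterL l = false := by
      rcases hop with rfl | rfl <;> simp [isLetterL]
    have hlv : ∀ y : ℕ, (l = .openv y ∨ l = .closev y) → y = z := by
      intro y hy
      rcases hop with rfl | rfl <;> rcases hy with hy | hy <;> simp_all
    try simp only [List.append_nil]
    refine ⟨?_, ?_, ?_, ?_, ?_⟩
    · simp [readWord_append, readWord_single_nonletter hnl, hr1]
    · simp [readWord_append, readWord_single_nonletter hnl, hr2]
    · intro x hx
      rw [posEnd_snoc_nonletter hnl]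
      by_cases hxx : x = z
      · subst hxx
        have hK' := hK x hx
        have hxeq : (⟨x, hx⟩ : {y // y ∈ ComVars A1 A2}) = ⟨x, hz⟩ := Subtype.ext rfl
        rw [hxeq, hc] at hK' ⊢
        obtain ⟨e3, e4, ho, hcc⟩ := hK'
        refine ⟨?_, ?_, ?_, ?_⟩
        · simp [e3]
        · simp [e4]
        · rw [occs_snoc, occs_snoc, ho, hpe1]
        · rw [occs_snoc, occs_snoc, hcc, hpe1]
      · have hK' := hK x hx
        have ho1 : l ≠ .openv x := fun he => hxx (hlv x (Or.inl he))
        have ho2 : l ≠ .closev x := fun he => hxx (hlv x (Or.inr he))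
        rw [occs_snoc_ne ho1, occs_snoc_ne ho2, occs_snoc_ne ho1, occs_snoc_ne ho2]
        exact hK'
    · intro x hx2
      rcases hn2 x hx2 with ⟨e1, e2⟩
      refine ⟨?_, ?_⟩
      · rw [occs_snoc, occs_snoc, hpe1, e1]
      · rw [occs_snoc, occs_snoc, hpe1, e2]
    · intro x hx1
      have hxx : x ≠ z := by
        rintro rfl
        exact hx1 (Finset.mem_inter.1 hz).1
      rcases hn1 x hx1 with ⟨e1, e2⟩
      have ho1 : l ≠ .openv x := fun he => hxx (hlv x (Or.inl he))
      have ho2 : l ≠ .closev x := fun he => hxx (hlv x (Or.inr he))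
      rw [occs_snoc_ne ho1, occs_snoc_ne ho2]
      exact ⟨e1, e2⟩
  | open2 hz hc h =>
    rename_i z pcc s1
    obtain ⟨po1, pc1⟩ := s1
    have hnl : isLetterL (if po1 then (VLabel.eps : VLabel Sig) else .openv z) = false := by
      cases po1 <;> simp [isLetterL]
    have hno : ∀ y : ℕ, (if po1 then (VLabel.eps : VLabel Sig) else .openv z) = .openv y → y = z := by
      intro y hy; cases po1 <;> simp_all
    have hncl : ∀ y : ℕ, (if po1 then (VLabel.eps : VLabel Sig) else .openv z) ≠ .closev y := by
      intro y; cases po1 <;> simp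
    try simp only [List.append_nil]
    refine ⟨?_, ?_, ?_, ?_, ?_⟩
    · simp [readWord_append, readWord_single_nonletter hnl, hr1]
    · simp [readWord_append, readWord_single_nonletter hnl,
        readWord_single_nonletter (show isLetterL (VLabel.openv z : VLabel Sig) = false by simp [isLetterL]), hr2]
    · intro x hx
      rw [posEnd_snoc_nonletter hnl]
      by_cases hxx : x = z
      · subst hxx
        have hK' := hK x hx
        rw [hc] at hK'
        obtain ⟨a, b, e1, e2, e3, e4, e5, e6, e7, e8⟩ := hK'
        have hxeq : (⟨x, hx⟩ : {y // y ∈ ComVars A1 A2}) = ⟨x, hz⟩ := Subtype.ext rfl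
        rw [hxeq, Function.update_self]
        rw [occs_snoc_self, occs_snoc_ne (show (VLabel.openv x : VLabel Sig) ≠ .closev x by simp)]
        cases po1 with
        | false =>
          simp only [Bool.false_eq_true, Bool.true_eq_false, eq_self_iff_true, if_false, if_true]
          rw [occs_snoc_self, occs_snoc_ne (show (VLabel.openv x : VLabel Sig) ≠ .closev x by simp)]
          refine ⟨posEnd ls, b, ?_, e2, ?_, e4, ?_, ?_, fun _ => rfl, e8⟩
          · simp [e1]
          · simp [e3, hpe2]
          · simp [e5]
          · simp [e6]
        | true =>
          have ha : a = posEnd ls := e7 (by simp)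
          simp only [Bool.false_eq_true, Bool.true_eq_false, eq_self_iff_true, if_false, if_true]
          rw [occs_snoc_ne (show (VLabel.eps : VLabel Sig) ≠ .openv x by simp),
            occs_snoc_ne (show (VLabel.eps : VLabel Sig) ≠ .closev x by simp)]
          refine ⟨a, b, e1, e2, ?_, e4, ?_, ?_, ?_, e8⟩
          · simp [e3, hpe2, ha]
          · simp [e5]
          · simp [e6]
          · intro hcon; simp at hcon
      · have hK' := hK x hx
        have hupd : Function.update c ⟨z, hz⟩ (Sum.inl ((po1, pc1), (true, pcc))) ⟨x, hx⟩
            = c ⟨x, hx⟩ := by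
          apply Function.update_of_ne
          simp [Subtype.ext_iff, hxx]
        have ho : (if po1 then (VLabel.eps : VLabel Sig) else .openv z) ≠ .openv x := by
          intro he; exact hxx (hno x he)
        rw [hupd, occs_snoc_ne ho, occs_snoc_ne (hncl x),
          occs_snoc_ne (show (VLabel.openv z : VLabel Sig) ≠ .openv x by simp [Ne.symm hxx]),
          occs_snoc_ne (show (VLabel.openv z : VLabel Sig) ≠ .closev x by simp)]
        exact hK'
    · intro x hx2
      have hxx : x ≠ z := by
        rintro rfl
        exact hx2 (Finset.mem_inter.1 hz).2
      rcases hn2 x hx2 with ⟨e1, e2⟩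
      have ho : (if po1 then (VLabel.eps : VLabel Sig) else .openv z) ≠ .openv x := by
        intro he; exact hxx (hno x he)
      rw [occs_snoc_ne ho, occs_snoc_ne (hncl x)]
      exact ⟨e1, e2⟩
    · intro x hx1
      have hxx : x ≠ z := by
        rintro rfl
        exact hx1 (Finset.mem_inter.1 hz).1
      rcases hn1 x hx1 with ⟨e1, e2⟩
      have ho : (if po1 then (VLabel.eps : VLabel Sig) else .openv z) ≠ .openv x := by
        intro he; exact hxx (hno x he)
      rw [occs_snoc_ne ho, occs_snoc_ne (hncl x),
        occs_snoc_ne (show (VLabel.openv z : VLabel Sig) ≠ .openv x by simp [Ne.symm hxx]),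
        occs_snoc_ne (show (VLabel.openv z : VLabel Sig) ≠ .closev x by simp)]
      exact ⟨e1, e2⟩
  | close2 hz hc h =>
    rename_i z poo s1
    obtain ⟨po1, pc1⟩ := s1
    have hnl : isLetterL (if pc1 then (VLabel.eps : VLabel Sig) else .closev z) = false := by
      cases pc1 <;> simp [isLetterL]
    have hno : ∀ y : ℕ, (if pc1 then (VLabel.eps : VLabel Sig) else .closev z) = .closev y → y = z := by
      intro y hy; cases pc1 <;> simp_all
    have hncl : ∀ y : ℕ, (if pc1 then (VLabel.eps : VLabel Sig) else .closev z) ≠ .openv y := by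
      intro y; cases pc1 <;> simp
    try simp only [List.append_nil]
    refine ⟨?_, ?_, ?_, ?_, ?_⟩
    · simp [readWord_append, readWord_single_nonletter hnl, hr1]
    · simp [readWord_append, readWord_single_nonletter hnl,
        readWord_single_nonletter (show isLetterL (VLabel.closev z : VLabel Sig) = false by simp [isLetterL]), hr2]
    · intro x hx
      rw [posEnd_snoc_nonletter hnl]
      by_cases hxx : x = z
      · subst hxx
        have hK' := hK x hx
        rw [hc] at hK'
        obtain ⟨a, b, e1, e2, e3, e4, e5, e6, e7, e8⟩ := hK'
        have hxeq : (⟨x, hx⟩ : {y // y ∈ ComVars A1 A2}) = ⟨x, hz⟩ := Subtype.ext rfl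
        rw [hxeq, Function.update_self]
        rw [occs_snoc_self, occs_snoc_ne (show (VLabel.closev x : VLabel Sig) ≠ .openv x by simp)]
        cases pc1 with
        | false =>
          simp only [Bool.false_eq_true, Bool.true_eq_false, eq_self_iff_true, if_false, if_true]
          rw [occs_snoc_self, occs_snoc_ne (show (VLabel.closev x : VLabel Sig) ≠ .openv x by simp)]
          refine ⟨a, posEnd ls, e1, ?_, e3, ?_, ?_, ?_, e7, fun _ => rfl⟩
          · simp [e2]
          · simp [e4, hpe2]
          · simp [e5]
          · simp [e6]
        | true =>
          have hb : b = posEnd ls := e8 (by simp)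
          simp only [Bool.false_eq_true, Bool.true_eq_false, eq_self_iff_true, if_false, if_true]
          rw [occs_snoc_ne (show (VLabel.eps : VLabel Sig) ≠ .openv x by simp),
            occs_snoc_ne (show (VLabel.eps : VLabel Sig) ≠ .closev x by simp)]
          refine ⟨a, b, e1, e2, e3, ?_, ?_, ?_, e7, ?_⟩
          · simp [e4, hpe2, hb]
          · simp [e5]
          · simp [e6]
          · intro hcon; simp at hcon
      · have hK' := hK x hx
        have hupd : Function.update c ⟨z, hz⟩ (Sum.inl ((po1, pc1), (poo, true))) ⟨x, hx⟩
            = c ⟨x, hx⟩ := by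
          apply Function.update_of_ne
          simp [Subtype.ext_iff, hxx]
        have ho : (if pc1 then (VLabel.eps : VLabel Sig) else .closev z) ≠ .closev x := by
          intro he; exact hxx (hno x he)
        rw [hupd, occs_snoc_ne (hncl x), occs_snoc_ne ho,
          occs_snoc_ne (show (VLabel.closev z : VLabel Sig) ≠ .openv x by simp),
          occs_snoc_ne (show (VLabel.closev z : VLabel Sig) ≠ .closev x by simp [Ne.symm hxx])]
        exact hK'
    · intro x hx2
      have hxx : x ≠ z := by
        rintro rfl
        exact hx2 (Finset.mem_inter.1 hz).2
      rcases hn2 x hx2 with ⟨e1, e2⟩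
      have ho : (if pc1 then (VLabel.eps : VLabel Sig) else .closev z) ≠ .closev x := by
        intro he; exact hxx (hno x he)
      rw [occs_snoc_ne (hncl x), occs_snoc_ne ho]
      exact ⟨e1, e2⟩
    · intro x hx1
      have hxx : x ≠ z := by
        rintro rfl
        exact hx1 (Finset.mem_inter.1 hz).1
      rcases hn1 x hx1 with ⟨e1, e2⟩
      have ho : (if pc1 then (VLabel.eps : VLabel Sig) else .closev z) ≠ .closev x := by
        intro he; exact hxx (hno x he)
      rw [occs_snoc_ne (hncl x), occs_snoc_ne ho,
        occs_snoc_ne (show (VLabel.closev z : VLabel Sig) ≠ .openv x by simp),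
        occs_snoc_ne (show (VLabel.closev z : VLabel Sig) ≠ .closev x by simp [Ne.symm hxx])]
      exact ⟨e1, e2⟩
  | excl2enter hz hc hop h =>
    rename_i l z s2
    obtain ⟨po2, pc2⟩ := s2
    have hnl : isLetterL l = false := by
      rcases hop with rfl | rfl <;> simp [isLetterL]
    have hlv : ∀ y : ℕ, (l = .openv y ∨ l = .closev y) → y = z := by
      intro y hy
      rcases hop with rfl | rfl <;> rcases hy with hy | hy <;> simp_all
    try simp only [List.append_nil]
    refine ⟨?_, ?_, ?_, ?_, ?_⟩
    · simp [readWord_append, readWord_single_nonletter hnl, hr1]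
    · simp [readWord_append, readWord_single_nonletter hnl, hr2]
    · intro x hx
      rw [posEnd_snoc_nonletter hnl]
      by_cases hxx : x = z
      · subst hxx
        have hK' := hK x hx
        rw [hc] at hK'
        obtain ⟨a, b, e1, e2, e3, e4, e5, e6, e7, e8⟩ := hK'
        have hxeq : (⟨x, hx⟩ : {y // y ∈ ComVars A1 A2}) = ⟨x, hz⟩ := Subtype.ext rfl
        rw [hxeq, Function.update_self]
        have ho : occs ls (VLabel.openv x) = occs ls2 (VLabel.openv x) := by
          rw [e5, e3]; simp
        have hcc : occs ls (VLabel.closev x) = occs ls2 (VLabel.closev x) := by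
          rw [e6, e4]; simp
        refine ⟨?_, ?_, ?_, ?_⟩
        · simp [e1]
        · simp [e2]
        · rw [occs_snoc, occs_snoc, ho, hpe2]
        · rw [occs_snoc, occs_snoc, hcc, hpe2]
      · have hK' := hK x hx
        have hupd : Function.update c ⟨z, hz⟩ (Sum.inr false) ⟨x, hx⟩ = c ⟨x, hx⟩ := by
          apply Function.update_of_ne
          simp [Subtype.ext_iff, hxx]
        have ho1 : l ≠ .openv x := fun he => hxx (hlv x (Or.inl he))
        have ho2 : l ≠ .closev x := fun he => hxx (hlv x (Or.inr he))
        rw [hupd, occs_snoc_ne ho1, occs_snoc_ne ho2, occs_snoc_ne ho1, occs_snoc_ne ho2]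
        exact hK'
    · intro x hx2
      have hxx : x ≠ z := by
        rintro rfl
        exact hx2 (Finset.mem_inter.1 hz).2
      rcases hn2 x hx2 with ⟨e1, e2⟩
      have ho1 : l ≠ .openv x := fun he => hxx (hlv x (Or.inl he))
      have ho2 : l ≠ .closev x := fun he => hxx (hlv x (Or.inr he))
      rw [occs_snoc_ne ho1, occs_snoc_ne ho2]
      exact ⟨e1, e2⟩
    · intro x hx1
      rcases hn1 x hx1 with ⟨e1, e2⟩
      refine ⟨?_, ?_⟩
      · rw [occs_snoc, occs_snoc, hpe2, e1]
      · rw [occs_snoc, occs_snoc, hpe2, e2]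
  | excl2op hz hc hop h =>
    rename_i l z
    have hnl : isLetterL l = false := by
      rcases hop with rfl | rfl <;> simp [isLetterL]
    have hlv : ∀ y : ℕ, (l = .openv y ∨ l = .closev y) → y = z := by
      intro y hy
      rcases hop with rfl | rfl <;> rcases hy with hy | hy <;> simp_all
    try simp only [List.append_nil]
    refine ⟨?_, ?_, ?_, ?_, ?_⟩
    · simp [readWord_append, readWord_single_nonletter hnl, hr1]
    · simp [readWord_append, readWord_single_nonletter hnl, hr2]
    · intro x hx
      rw [posEnd_snoc_nonletter hnl]
      by_cases hxx : x = z
      · subst hxx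
        have hK' := hK x hx
        have hxeq : (⟨x, hx⟩ : {y // y ∈ ComVars A1 A2}) = ⟨x, hz⟩ := Subtype.ext rfl
        rw [hxeq, hc] at hK' ⊢
        obtain ⟨e3, e4, ho, hcc⟩ := hK'
        refine ⟨?_, ?_, ?_, ?_⟩
        · simp [e3]
        · simp [e4]
        · rw [occs_snoc, occs_snoc, ho, hpe2]
        · rw [occs_snoc, occs_snoc, hcc, hpe2]
      · have hK' := hK x hx
        have ho1 : l ≠ .openv x := fun he => hxx (hlv x (Or.inl he))
        have ho2 : l ≠ .closev x := fun he => hxx (hlv x (Or.inr he))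
        rw [occs_snoc_ne ho1, occs_snoc_ne ho2, occs_snoc_ne ho1, occs_snoc_ne ho2]
        exact hK'
    · intro x hx2
      have hxx : x ≠ z := by
        rintro rfl
        exact hx2 (Finset.mem_inter.1 hz).2
      rcases hn2 x hx2 with ⟨e1, e2⟩
      have ho1 : l ≠ .openv x := fun he => hxx (hlv x (Or.inl he))
      have ho2 : l ≠ .closev x := fun he => hxx (hlv x (Or.inr he))
      rw [occs_snoc_ne ho1, occs_snoc_ne ho2]
      exact ⟨e1, e2⟩
    · intro x hx1
      rcases hn1 x hx1 with ⟨e1, e2⟩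
      refine ⟨?_, ?_⟩
      · rw [occs_snoc, occs_snoc, hpe2, e1]
      · rw [occs_snoc, occs_snoc, hpe2, e2]

theorem mrun_ginv {q01 q02 : ℕ} {ls1 ls2 ls : List (VLabel Sig)} {c' : Cfg A1 A2} {q1' q2' : ℕ}
    (h : MRun A1 A2 (cfg0 A1 A2) q01 q02 ls1 ls2 ls c' q1' q2') :
    GInv A1 A2 c' ls1 ls2 ls := by
  generalize hc0 : cfg0 A1 A2 = c0 at h
  induction h with
  | nil => rw [← hc0]; exact ginv_nil
  | snoc hr hs ih => exact ginv_step ih hs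

end Product

/-! ### Part 4: the product automaton -/

section Product

variable (A1 A2 : VA Sig)

noncomputable instance : Fintype (Cfg A1 A2) := by
  unfold Cfg; infer_instance

variable (enc : Cfg A1 A2 × ℕ × ℕ → ℕ)

noncomputable def pStates : Finset ℕ :=
  ((Finset.univ : Finset (Cfg A1 A2)) ×ˢ statesOf A1 ×ˢ statesOf A2).image enc

noncomputable def pLabels : Finset (VLabel Sig) :=
  insert VLabel.eps (A1.δ.image (fun t => t.2.1) ∪ A2.δ.image (fun t => t.2.1))

noncomputable def pTrans : Finset (ℕ × VLabel Sig × ℕ) :=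
  @Finset.filter _
    (fun t => ∃ c q1 q2 l w1 w2 c' q1' q2', PStep A1 A2 c q1 q2 l w1 w2 c' q1' q2' ∧
       t = (enc (c, q1, q2), l, enc (c', q1', q2')))
    (fun _ => Classical.propDecidable _)
    (pStates A1 A2 enc ×ˢ pLabels A1 A2 ×ˢ pStates A1 A2 enc)

noncomputable def prodVA : VA Sig where
  q0 := enc (cfg0 A1 A2, A1.q0, A2.q0)
  F := ((Finset.univ : Finset (Cfg A1 A2)) ×ˢ A1.F ×ˢ A2.F).image enc
  δ := pTrans A1 A2 enc

variable {A1 A2 enc}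

theorem mem_statesOf_src {A : VA Sig} {p q : ℕ} {l : VLabel Sig} (h : (p, l, q) ∈ A.δ) :
    p ∈ statesOf A := by
  simp only [statesOf, Finset.mem_insert, Finset.mem_union, Finset.mem_image]
  right; left; right
  exact ⟨(p, l, q), h, rfl⟩

theorem mem_statesOf_tgt {A : VA Sig} {p q : ℕ} {l : VLabel Sig} (h : (p, l, q) ∈ A.δ) :
    q ∈ statesOf A := by
  simp only [statesOf, Finset.mem_insert, Finset.mem_union, Finset.mem_image]
  right; right
  exact ⟨(p, l, q), h, rfl⟩

theorem q0_mem_statesOf (A : VA Sig) : A.q0 ∈ statesOf A := Finset.mem_insert_self _ _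

theorem F_subset_statesOf (A : VA Sig) : A.F ⊆ statesOf A := by
  intro q hq
  simp only [statesOf, Finset.mem_insert, Finset.mem_union]
  right; left; left; exact hq

theorem PStep.state1 {c q1 q2 l w1 w2 c' q1' q2'}
    (hs : PStep A1 A2 c q1 q2 l w1 w2 c' q1' q2') (h1 : q1 ∈ statesOf A1) :
    q1' ∈ statesOf A1 := by
  cases hs <;> first | exact h1 | (apply mem_statesOf_tgt; assumption)

theorem PStep.state2 {c q1 q2 l w1 w2 c' q1' q2'}
    (hs : PStep A1 A2 c q1 q2 l w1 w2 c' q1' q2') (h2 : q2 ∈ statesOf A2) :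
    q2' ∈ statesOf A2 := by
  cases hs <;> first | exact h2 | (apply mem_statesOf_tgt; assumption)

theorem PStep.label_mem {c q1 q2 l w1 w2 c' q1' q2'}
    (hs : PStep A1 A2 c q1 q2 l w1 w2 c' q1' q2') : l ∈ pLabels A1 A2 := by
  have h1 : ∀ {p r : ℕ} {l' : VLabel Sig}, (p, l', r) ∈ A1.δ → l' ∈ pLabels A1 A2 := by
    intro p r l' h
    simp only [pLabels, Finset.mem_insert, Finset.mem_union, Finset.mem_image]
    right; left; exact ⟨(p, l', r), h, rfl⟩
  have h2 : ∀ {p r : ℕ} {l' : VLabel Sig}, (p, l', r) ∈ A2.δ → l' ∈ pLabels A1 A2 := by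
    intro p r l' h
    simp only [pLabels, Finset.mem_insert, Finset.mem_union, Finset.mem_image]
    right; right; exact ⟨(p, l', r), h, rfl⟩
  have heps : (VLabel.eps : VLabel Sig) ∈ pLabels A1 A2 := Finset.mem_insert_self _ _
  cases hs with
  | free1 h hl hv => exact h1 h
  | free2 h hl hv => exact h2 h
  | letter ha hb hs => exact h1 ha
  | open1 hx hc h =>
    rename_i s2
    obtain ⟨po2, pc2⟩ := s2
    cases po2
    · simpa using h1 h
    · simpa using heps
  | close1 hx hc h =>
    rename_i s2
    obtain ⟨po2, pc2⟩ := s2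
    cases pc2
    · simpa using h1 h
    · simpa using heps
  | excl1enter hx hc hop h => exact h1 h
  | excl1op hx hc hop h => exact h1 h
  | open2 hx hc h =>
    rename_i s1
    obtain ⟨po1, pc1⟩ := s1
    cases po1
    · simpa using h2 h
    · simpa using heps
  | close2 hx hc h =>
    rename_i s1
    obtain ⟨po1, pc1⟩ := s1
    cases pc1
    · simpa using h2 h
    · simpa using heps
  | excl2enter hx hc hop h => exact h2 h
  | excl2op hx hc hop h => exact h2 h

theorem mem_pStates {c : Cfg A1 A2} {q1 q2 : ℕ} (h1 : q1 ∈ statesOf A1)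
    (h2 : q2 ∈ statesOf A2) : enc (c, q1, q2) ∈ pStates A1 A2 enc := by
  apply Finset.mem_image_of_mem
  simp [Finset.mem_product, h1, h2]

theorem pstep_trans_mem {c q1 q2 l w1 w2 c' q1' q2'}
    (hs : PStep A1 A2 c q1 q2 l w1 w2 c' q1' q2')
    (h1 : q1 ∈ statesOf A1) (h2 : q2 ∈ statesOf A2) :
    (enc (c, q1, q2), l, enc (c', q1', q2')) ∈ pTrans A1 A2 enc := by
  simp only [pTrans, Finset.mem_filter]
  refine ⟨?_, ?_⟩
  · simp only [Finset.mem_product]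
    exact ⟨mem_pStates h1 h2, hs.label_mem, mem_pStates (hs.state1 h1) (hs.state2 h2)⟩
  · exact ⟨c, q1, q2, l, w1, w2, c', q1', q2', hs, rfl⟩

theorem mrun_prodPath {c q1 q2 ls1 ls2 ls c' q1' q2'}
    (h : MRun A1 A2 c q1 q2 ls1 ls2 ls c' q1' q2')
    (h1 : q1 ∈ statesOf A1) (h2 : q2 ∈ statesOf A2) :
    VA.PathFrom (prodVA A1 A2 enc) (enc (c, q1, q2)) ls (enc (c', q1', q2')) ∧
      q1' ∈ statesOf A1 ∧ q2' ∈ statesOf A2 := by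
  induction h with
  | nil => exact ⟨VA.PathFrom.nil _, h1, h2⟩
  | snoc hr hs ih =>
    obtain ⟨hp, hm1, hm2⟩ := ih
    refine ⟨hp.append (VA.PathFrom.single ?_), hs.state1 hm1, hs.state2 hm2⟩
    exact pstep_trans_mem hs hm1 hm2

variable (henc : Function.Injective enc)
include henc

theorem pTrans_decode {c : Cfg A1 A2} {q1 q2 : ℕ} {l : VLabel Sig} {p' : ℕ}
    (h : (enc (c, q1, q2), l, p') ∈ pTrans A1 A2 enc) :
    ∃ w1 w2 c' q1' q2', PStep A1 A2 c q1 q2 l w1 w2 c' q1' q2' ∧ p' = enc (c', q1', q2') := by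
  simp only [pTrans, Finset.mem_filter] at h
  obtain ⟨-, c0, q10, q20, l0, w1, w2, c0', q10', q20', hstep, heq⟩ := h
  have he1 : enc (c, q1, q2) = enc (c0, q10, q20) := congrArg Prod.fst heq
  have he2 : l = l0 := congrArg (fun t => t.2.1) heq
  have he3 : p' = enc (c0', q10', q20') := congrArg (fun t => t.2.2) heq
  obtain ⟨rfl, rfl, rfl⟩ : c = c0 ∧ q1 = q10 ∧ q2 = q20 := by
    have := henc he1
    simpa [Prod.ext_iff] using this
  subst he2
  exact ⟨w1, w2, c0', q10', q20', hstep, he3⟩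

theorem prodPath_mrun {p0 : ℕ} {ls : List (VLabel Sig)} {p' : ℕ}
    (h : VA.PathFrom (prodVA A1 A2 enc) p0 ls p') :
    ∀ c q1 q2, p0 = enc (c, q1, q2) →
      ∃ ls1 ls2 c' q1' q2', p' = enc (c', q1', q2') ∧
        MRun A1 A2 c q1 q2 ls1 ls2 ls c' q1' q2' := by
  induction h with
  | nil q =>
    intro c q1 q2 hq
    exact ⟨[], [], c, q1, q2, hq, MRun.nil _ _ _⟩
  | cons hδ htail ih =>
    intro c q1 q2 hq
    subst hq
    obtain ⟨w1, w2, cm, q1m, q2m, hstep, hmid⟩ := pTrans_decode henc hδ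
    obtain ⟨ls1, ls2, c', q1', q2', hend, hrun⟩ := ih cm q1m q2m hmid
    exact ⟨w1 ++ ls1, w2 ++ ls2, c', q1', q2', hend, MRun.cons hstep hrun⟩

theorem prodF_decode {c : Cfg A1 A2} {q1 q2 : ℕ}
    (h : enc (c, q1, q2) ∈ (prodVA A1 A2 enc).F) : q1 ∈ A1.F ∧ q2 ∈ A2.F := by
  simp only [prodVA, Finset.mem_image] at h
  obtain ⟨⟨c0, f1, f2⟩, hmem, heq⟩ := h
  obtain ⟨rfl, rfl, rfl⟩ : c0 = c ∧ f1 = q1 ∧ f2 = q2 := by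
    have := henc heq
    simpa [Prod.ext_iff] using this
  simp only [Finset.mem_product] at hmem
  exact ⟨hmem.2.1, hmem.2.2⟩

theorem prodF_mem {c : Cfg A1 A2} {q1 q2 : ℕ} (h1 : q1 ∈ A1.F) (h2 : q2 ∈ A2.F) :
    enc (c, q1, q2) ∈ (prodVA A1 A2 enc).F := by
  apply Finset.mem_image_of_mem
  simp [Finset.mem_product, h1, h2]

end Product

/-! ### Part 5: semantics of merged runs -/

theorem cnd_eq_nil_iff {b : Bool} {v : ℕ} : cnd b v = [] ↔ b = false := by
  cases b <;> simp

section Product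

variable {A1 A2 : VA Sig}

theorem path_label_vars {A : VA Sig} {q q' : ℕ} {ls : List (VLabel Sig)}
    (h : VA.PathFrom A q ls q') : ∀ l ∈ ls, ∀ x ∈ labelVars l, x ∈ varsOf A := by
  induction h with
  | nil => simp
  | cons hδ htail ih =>
    intro l hl x hx
    rcases List.mem_cons.1 hl with rfl | hl'
    · exact label_vars_mem hδ x hx
    · exact ih l hl' x hx

theorem occs_eq_nil_of_not_var {A : VA Sig} {q q' : ℕ} {ls : List (VLabel Sig)} {x : ℕ}
    (h : VA.PathFrom A q ls q') (hx : x ∉ varsOf A) :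
    occs ls (.openv x) = [] ∧ occs ls (.closev x) = [] := by
  constructor
  · by_contra hne
    exact hx (path_label_vars h _ (occs_ne_nil_iff.1 hne) x (by simp [labelVars]))
  · by_contra hne
    exact hx (path_label_vars h _ (occs_ne_nil_iff.1 hne) x (by simp [labelVars]))

/-- Compute `runMapping` from singleton occurrence lists. -/
theorem runMapping_single {ls : List (VLabel Sig)} {x a b : ℕ}
    (ho : occs ls (.openv x) = [a]) (hc : occs ls (.closev x) = [b]) :
    runMapping ls x = some (a, b) := runMapping_eq_some ho hc

theorem mrun_semantics {ls1 ls2 ls : List (VLabel Sig)} {cend : Cfg A1 A2} {f1 f2 : ℕ}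
    (hrun : MRun A1 A2 (cfg0 A1 A2) A1.q0 A2.q0 ls1 ls2 ls cend f1 f2)
    (hv1 : ValidLabels ls1) (hv2 : ValidLabels ls2) :
    ValidLabels ls ∧ Compatible (runMapping ls1) (runMapping ls2) ∧
      runMapping ls = munion (runMapping ls1) (runMapping ls2) := by
  obtain ⟨hw1, hw2, hK, hn2, hn1⟩ := mrun_ginv hrun
  have hOV1 := validLabels_iff.1 hv1
  have hOV2 := validLabels_iff.1 hv2
  have hpath1 := hrun.path1
  have hpath2 := hrun.path2
  have hP : ∀ x, OccValid (occs ls (.openv x)) (occs ls (.closev x)) ∧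
      runMapping ls x = munion (runMapping ls1) (runMapping ls2) x ∧
      (∀ s1 s2, runMapping ls1 x = some s1 → runMapping ls2 x = some s2 → s1 = s2) := by
    intro x
    by_cases hx : x ∈ ComVars A1 A2
    · have hSt := hK x hx
      obtain ⟨ho1l, hc1l, hi1, hle1⟩ := hOV1 x
      obtain ⟨ho2l, hc2l, hi2, hle2⟩ := hOV2 x
      cases hcx : cend ⟨x, hx⟩ with
      | inl s =>
        obtain ⟨⟨po1, pc1⟩, po2, pc2⟩ := s
        rw [hcx] at hSt
        obtain ⟨a, b, e1, e2, e3, e4, e5, e6, _, _⟩ := hSt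
        have hpp1 : po1 = pc1 := by
          cases po1 <;> cases pc1 <;> simp_all
        have hpp2 : po2 = pc2 := by
          cases po2 <;> cases pc2 <;> simp_all
        subst hpp1 hpp2
        cases po1 with
        | false =>
          cases po2 with
          | false =>
            have hm1 : runMapping ls1 x = none := runMapping_eq_none (by simpa using e1)
            have hm2 : runMapping ls2 x = none := runMapping_eq_none (by simpa using e3)
            have hm : runMapping ls x = none := runMapping_eq_none (by simpa using e5)
            refine ⟨⟨?_, ?_, ?_, ?_⟩, ?_, ?_⟩
            · simp [e5]
            · simp [e6]
            · simp [e5, e6]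
            · simp [e5]
            · simp [munion, hm, hm1, hm2]
            · intro s1 s2 h1 h2; rw [hm1] at h1; cases h1
          | true =>
            have hab : a ≤ b := hle2 a (by simp [e3]) b (by simp [e4])
            have hm1 : runMapping ls1 x = none := runMapping_eq_none (by simpa using e1)
            have hm2 : runMapping ls2 x = some (a, b) :=
              runMapping_single (by simpa using e3) (by simpa using e4)
            have hm : runMapping ls x = some (a, b) :=
              runMapping_single (by simpa using e5) (by simpa using e6)
            refine ⟨⟨?_, ?_, ?_, ?_⟩, ?_, ?_⟩
            · simp [e5]
            · simp [e6]
            · simp [e5, e6]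
            · simp [e5, e6]; omega
            · simp [munion, hm, hm1, hm2]
            · intro s1 s2 h1 h2; rw [hm1] at h1; cases h1
        | true =>
          cases po2 with
          | false =>
            have hab : a ≤ b := hle1 a (by simp [e1]) b (by simp [e2])
            have hm1 : runMapping ls1 x = some (a, b) :=
              runMapping_single (by simpa using e1) (by simpa using e2)
            have hm2 : runMapping ls2 x = none := runMapping_eq_none (by simpa using e3)
            have hm : runMapping ls x = some (a, b) :=
              runMapping_single (by simpa using e5) (by simpa using e6)
            refine ⟨⟨?_, ?_, ?_, ?_⟩, ?_, ?_⟩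
            · simp [e5]
            · simp [e6]
            · simp [e5, e6]
            · simp [e5, e6]; omega
            · simp [munion, hm, hm1, hm2]
            · intro s1 s2 h1 h2; rw [hm2] at h2; cases h2
          | true =>
            have hab : a ≤ b := hle1 a (by simp [e1]) b (by simp [e2])
            have hm1 : runMapping ls1 x = some (a, b) :=
              runMapping_single (by simpa using e1) (by simpa using e2)
            have hm2 : runMapping ls2 x = some (a, b) :=
              runMapping_single (by simpa using e3) (by simpa using e4)
            have hm : runMapping ls x = some (a, b) :=
              runMapping_single (by simpa using e5) (by simpa using e6)
            refine ⟨⟨?_, ?_, ?_, ?_⟩, ?_, ?_⟩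
            · simp [e5]
            · simp [e6]
            · simp [e5, e6]
            · simp [e5, e6]; omega
            · simp [munion, hm, hm1, hm2]
            · intro s1 s2 h1 h2
              rw [hm1] at h1; rw [hm2] at h2
              cases h1; cases h2; rfl
      | inr bb =>
        cases bb with
        | true =>
          rw [hcx] at hSt
          obtain ⟨e3, e4, ho, hcc⟩ := hSt
          have hm2 : runMapping ls2 x = none := runMapping_eq_none e3
          refine ⟨⟨?_, ?_, ?_, ?_⟩, ?_, ?_⟩
          · rw [ho]; exact ho1l
          · rw [hcc]; exact hc1l
          · rw [ho, hcc]; exact hi1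
          · rw [ho, hcc]; exact hle1
          · cases hol : occs ls1 (VLabel.openv x) with
            | nil =>
              have hm1 : runMapping ls1 x = none := runMapping_eq_none hol
              have hm : runMapping ls x = none := runMapping_eq_none (by rw [ho, hol])
              simp [munion, hm, hm1, hm2]
            | cons a t =>
              have ht : t = [] := by
                have := ho1l; rw [hol] at this; simp at this; exact this
              subst ht
              have hcne : occs ls1 (VLabel.closev x) ≠ [] := by
                intro he; rw [hi1.2 he] at hol; cases hol
              cases hcl : occs ls1 (VLabel.closev x) with
              | nil => exact absurd hcl hcne
              | cons b t' =>
                have ht' : t' = [] := by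
                  have := hc1l; rw [hcl] at this; simp at this; exact this
                subst ht'
                have hm1 : runMapping ls1 x = some (a, b) := runMapping_single hol hcl
                have hm : runMapping ls x = some (a, b) :=
                  runMapping_single (by rw [ho, hol]) (by rw [hcc, hcl])
                simp [munion, hm, hm1, hm2]
          · intro s1 s2 h1 h2; rw [hm2] at h2; cases h2
        | false =>
          rw [hcx] at hSt
          obtain ⟨e1, e2, ho, hcc⟩ := hSt
          have hm1 : runMapping ls1 x = none := runMapping_eq_none e1
          refine ⟨⟨?_, ?_, ?_, ?_⟩, ?_, ?_⟩
          · rw [ho]; exact ho2l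
          · rw [hcc]; exact hc2l
          · rw [ho, hcc]; exact hi2
          · rw [ho, hcc]; exact hle2
          · cases hol : occs ls2 (VLabel.openv x) with
            | nil =>
              have hm2 : runMapping ls2 x = none := runMapping_eq_none hol
              have hm : runMapping ls x = none := runMapping_eq_none (by rw [ho, hol])
              simp [munion, hm, hm1, hm2]
            | cons a t =>
              have ht : t = [] := by
                have := ho2l; rw [hol] at this; simp at this; exact this
              subst ht
              have hcne : occs ls2 (VLabel.closev x) ≠ [] := by
                intro he; rw [hi2.2 he] at hol; cases hol
              cases hcl : occs ls2 (VLabel.closev x) with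
              | nil => exact absurd hcl hcne
              | cons b t' =>
                have ht' : t' = [] := by
                  have := hc2l; rw [hcl] at this; simp at this; exact this
                subst ht'
                have hm2 : runMapping ls2 x = some (a, b) := runMapping_single hol hcl
                have hm : runMapping ls x = some (a, b) :=
                  runMapping_single (by rw [ho, hol]) (by rw [hcc, hcl])
                simp [munion, hm, hm1, hm2]
          · intro s1 s2 h1 h2; rw [hm1] at h1; cases h1
    · -- x not common
      have hor : x ∉ varsOf A1 ∨ x ∉ varsOf A2 := by
        by_contra hcon
        push_neg at hcon
        exact hx (Finset.mem_inter.2 ⟨hcon.1, hcon.2⟩)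
      rcases hor with hv | hv
      · obtain ⟨ho, hcc⟩ := hn1 x hv
        obtain ⟨hz1, hz2⟩ := occs_eq_nil_of_not_var hpath1 hv
        have hm1 : runMapping ls1 x = none := runMapping_eq_none hz1
        obtain ⟨ho2l, hc2l, hi2, hle2⟩ := hOV2 x
        refine ⟨⟨?_, ?_, ?_, ?_⟩, ?_, ?_⟩
        · rw [ho]; exact ho2l
        · rw [hcc]; exact hc2l
        · rw [ho, hcc]; exact hi2
        · rw [ho, hcc]; exact hle2
        · cases hol : occs ls2 (VLabel.openv x) with
          | nil =>
            have hm2 : runMapping ls2 x = none := runMapping_eq_none hol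
            have hm : runMapping ls x = none := runMapping_eq_none (by rw [ho, hol])
            simp [munion, hm, hm1, hm2]
          | cons a t =>
            have ht : t = [] := by
              have := ho2l; rw [hol] at this; simp at this; exact this
            subst ht
            have hcne : occs ls2 (VLabel.closev x) ≠ [] := by
              intro he; rw [hi2.2 he] at hol; cases hol
            cases hcl : occs ls2 (VLabel.closev x) with
            | nil => exact absurd hcl hcne
            | cons b t' =>
              have ht' : t' = [] := by
                have := hc2l; rw [hcl] at this; simp at this; exact this
              subst ht'
              have hm2 : runMapping ls2 x = some (a, b) := runMapping_single hol hcl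
              have hm : runMapping ls x = some (a, b) :=
                runMapping_single (by rw [ho, hol]) (by rw [hcc, hcl])
              simp [munion, hm, hm1, hm2]
        · intro s1 s2 h1 h2; rw [hm1] at h1; cases h1
      · obtain ⟨ho, hcc⟩ := hn2 x hv
        obtain ⟨hz1, hz2⟩ := occs_eq_nil_of_not_var hpath2 hv
        have hm2 : runMapping ls2 x = none := runMapping_eq_none hz1
        obtain ⟨ho1l, hc1l, hi1, hle1⟩ := hOV1 x
        refine ⟨⟨?_, ?_, ?_, ?_⟩, ?_, ?_⟩
        · rw [ho]; exact ho1l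
        · rw [hcc]; exact hc1l
        · rw [ho, hcc]; exact hi1
        · rw [ho, hcc]; exact hle1
        · cases hol : occs ls1 (VLabel.openv x) with
          | nil =>
            have hm1 : runMapping ls1 x = none := runMapping_eq_none hol
            have hm : runMapping ls x = none := runMapping_eq_none (by rw [ho, hol])
            simp [munion, hm, hm1, hm2]
          | cons a t =>
            have ht : t = [] := by
              have := ho1l; rw [hol] at this; simp at this; exact this
            subst ht
            have hcne : occs ls1 (VLabel.closev x) ≠ [] := by
              intro he; rw [hi1.2 he] at hol; cases hol
            cases hcl : occs ls1 (VLabel.closev x) with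
            | nil => exact absurd hcl hcne
            | cons b t' =>
              have ht' : t' = [] := by
                have := hc1l; rw [hcl] at this; simp at this; exact this
              subst ht'
              have hm1 : runMapping ls1 x = some (a, b) := runMapping_single hol hcl
              have hm : runMapping ls x = some (a, b) :=
                runMapping_single (by rw [ho, hol]) (by rw [hcc, hcl])
              simp [munion, hm, hm1, hm2]
        · intro s1 s2 h1 h2; rw [hm2] at h2; cases h2
  refine ⟨validLabels_iff.2 fun x => (hP x).1, ?_, ?_⟩
  · intro x s1 s2 h1 h2
    exact (hP x).2.2 s1 s2 h1 h2
  · funext x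
    exact (hP x).2.1

end Product

/-! ### Part 6: merging two compatible runs -/

theorem occs_cons_nonletter_ne {a lab : VLabel Sig} (h : isLetterL a = false) (hne : a ≠ lab)
    (t : List (VLabel Sig)) : occs (a :: t) lab = occs t lab := by
  rw [occs_cons, h]
  simp [hne]

theorem occs_cons_nonletter_self {a : VLabel Sig} (h : isLetterL a = false)
    (t : List (VLabel Sig)) : occs (a :: t) a = 1 :: occs t a := by
  rw [occs_cons, h]
  simp

theorem occs_cons_letter (σ : Sig) (t : List (VLabel Sig)) (lab : VLabel Sig)
    (hne : VLabel.letter σ ≠ lab) :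
    occs (VLabel.letter σ :: t) lab = (occs t lab).map (· + 1) := by
  rw [occs_cons]
  simp [hne, isLetterL]

theorem occs_pos {ls : List (VLabel Sig)} {lab : VLabel Sig} :
    ∀ p ∈ occs ls lab, 1 ≤ p := by
  induction ls with
  | nil => simp
  | cons a t ih =>
    intro p hp
    rw [occs_cons] at hp
    rcases List.mem_append.1 hp with h | h
    · by_cases hal : a = lab
      · simp [hal] at h; omega
      · simp [hal] at h
    · rcases List.mem_map.1 h with ⟨q, hq, he⟩
      have := ih q hq
      omega

theorem readWord_cons_letter (σ : Sig) (t : List (VLabel Sig)) :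
    readWord (VLabel.letter σ :: t) = σ :: readWord t := by
  simp [readWord]

theorem readWord_cons_nonletter {a : VLabel Sig} (h : isLetterL a = false)
    (t : List (VLabel Sig)) : readWord (a :: t) = readWord t := by
  cases a <;> simp_all [readWord, isLetterL]

theorem map_succ_singleton {u : List ℕ} {a : ℕ} (h : u.map (· + 1) = [a]) :
    u = [a - 1] := by
  cases u with
  | nil => simp at h
  | cons p t =>
    simp at h
    obtain ⟨h1, h2⟩ := h
    have h2' : t = [] := by simpa [List.map_eq_nil_iff] using h2
    subst h2'
    have : p = a - 1 := by omega
    rw [this]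

theorem map_succ_ne_one {u : List ℕ} (hu : ∀ p ∈ u, 1 ≤ p) :
    u.map (· + 1) ≠ [1] := by
  intro hcon
  have h1 : (1 : ℕ) ∈ u.map (· + 1) := by rw [hcon]; simp
  rcases List.mem_map.1 h1 with ⟨p, hp, he⟩
  have := hu p hp
  omega

/-- The suffix invariant for the merge construction: relates the status of a common
variable to the occurrences of its operations in the remaining parts of the two runs. -/
def MInvX (s : St) (u1 w1 u2 w2 : List ℕ) : Prop :=
  match s with
  | Sum.inl ((po1, pc1), (po2, pc2)) => ∃ a b : ℕ,
      ((po1 || pc1) = true ∨ u1 ≠ [] ∨ w1 ≠ [] → u1 = cnd (!po1) a ∧ w1 = cnd (!pc1) b) ∧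
      ((po2 || pc2) = true ∨ u2 ≠ [] ∨ w2 ≠ [] → u2 = cnd (!po2) a ∧ w2 = cnd (!pc2) b) ∧
      (po1 ≠ po2 → a = 1) ∧ (pc1 ≠ pc2 → b = 1) ∧
      ((po1 || pc1 || po2 || pc2) = true →
        (((po1 || pc1) = true ∨ u1 ≠ [] ∨ w1 ≠ []) ∧ ((po2 || pc2) = true ∨ u2 ≠ [] ∨ w2 ≠ [])))
  | Sum.inr true => u2 = [] ∧ w2 = []
  | Sum.inr false => u1 = [] ∧ w1 = []

/-- Crossing a letter: the status must be synchronized and the invariant persists. -/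
theorem minvx_letter {s : St} {σ τ : Sig} {t1 t2 : List (VLabel Sig)} {x : ℕ}
    (h : MInvX s (occs (VLabel.letter σ :: t1) (.openv x)) (occs (VLabel.letter σ :: t1) (.closev x))
      (occs (VLabel.letter τ :: t2) (.openv x)) (occs (VLabel.letter τ :: t2) (.closev x))) :
    SyncSt s ∧ MInvX s (occs t1 (.openv x)) (occs t1 (.closev x))
      (occs t2 (.openv x)) (occs t2 (.closev x)) := by
  rw [occs_cons_letter σ t1 (.openv x) (by simp), occs_cons_letter σ t1 (.closev x) (by simp),
    occs_cons_letter τ t2 (.openv x) (by simp), occs_cons_letter τ t2 (.closev x) (by simp)] at h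
  cases s with
  | inr bb =>
    cases bb with
    | true =>
      obtain ⟨h1, h2⟩ := h
      exact ⟨trivial, List.map_eq_nil_iff.1 h1, List.map_eq_nil_iff.1 h2⟩
    | false =>
      obtain ⟨h1, h2⟩ := h
      exact ⟨trivial, List.map_eq_nil_iff.1 h1, List.map_eq_nil_iff.1 h2⟩
  | inl s =>
    obtain ⟨⟨po1, pc1⟩, po2, pc2⟩ := s
    obtain ⟨a, b, C1, C2, C3, C4, C5⟩ := h
    have hpo : po1 = po2 := by
      by_contra hne
      have ha : a = 1 := C3 hne
      have h5 : (po1 || pc1 || po2 || pc2) = true := by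
        revert hne; cases po1 <;> cases po2 <;> simp
      obtain ⟨hU1, hU2⟩ := C5 h5
      obtain ⟨hu1, hw1⟩ := C1 hU1
      obtain ⟨hu2, hw2⟩ := C2 hU2
      cases hpo1 : po1 with
      | false =>
        rw [hpo1] at hu1
        simp only [Bool.not_false, cnd_true, ha] at hu1
        exact map_succ_ne_one (fun p hp => occs_pos p hp) hu1
      | true =>
        have hpo2 : po2 = false := by
          cases po2 <;> simp_all
        rw [hpo2] at hu2
        simp only [Bool.not_false, cnd_true, ha] at hu2
        exact map_succ_ne_one (fun p hp => occs_pos p hp) hu2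
    have hpc : pc1 = pc2 := by
      by_contra hne
      have hb : b = 1 := C4 hne
      have h5 : (po1 || pc1 || po2 || pc2) = true := by
        revert hne; cases pc1 <;> cases pc2 <;> simp
      obtain ⟨hU1, hU2⟩ := C5 h5
      obtain ⟨hu1, hw1⟩ := C1 hU1
      obtain ⟨hu2, hw2⟩ := C2 hU2
      cases hpc1 : pc1 with
      | false =>
        rw [hpc1] at hw1
        simp only [Bool.not_false, cnd_true, hb] at hw1
        exact map_succ_ne_one (fun p hp => occs_pos p hp) hw1
      | true =>
        have hpc2 : pc2 = false := by
          cases pc2 <;> simp_all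
        rw [hpc2] at hw2
        simp only [Bool.not_false, cnd_true, hb] at hw2
        exact map_succ_ne_one (fun p hp => occs_pos p hp) hw2
    refine ⟨by simp [SyncSt, hpo, hpc], a - 1, b - 1, ?_, ?_, ?_, ?_, ?_⟩
    · intro hc'
      have hc : (po1 || pc1) = true ∨ (occs t1 (VLabel.openv x)).map (· + 1) ≠ [] ∨
          (occs t1 (VLabel.closev x)).map (· + 1) ≠ [] := by
        rcases hc' with h | h | h
        · exact Or.inl h
        · exact Or.inr (Or.inl (fun hm => h (List.map_eq_nil_iff.1 hm)))
        · exact Or.inr (Or.inr (fun hm => h (List.map_eq_nil_iff.1 hm)))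
      obtain ⟨hu1, hw1⟩ := C1 hc
      constructor
      · cases hpo1 : po1 with
        | true =>
          rw [hpo1] at hu1
          have hzz0 : (occs t1 (VLabel.openv x)).map (· + 1) = [] := by simpa using hu1
          have hzz : occs t1 (VLabel.openv x) = [] := List.map_eq_nil_iff.1 hzz0
          simp [hzz]
        | false =>
          rw [hpo1] at hu1
          have hzz : occs t1 (VLabel.openv x) = [a - 1] := map_succ_singleton (by simpa using hu1)
          simp [hzz]
      · cases hpc1 : pc1 with
        | true =>
          rw [hpc1] at hw1
          have hzz0 : (occs t1 (VLabel.closev x)).map (· + 1) = [] := by simpa using hw1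
          have hzz : occs t1 (VLabel.closev x) = [] := List.map_eq_nil_iff.1 hzz0
          simp [hzz]
        | false =>
          rw [hpc1] at hw1
          have hzz : occs t1 (VLabel.closev x) = [b - 1] := map_succ_singleton (by simpa using hw1)
          simp [hzz]
    · intro hc'
      have hc : (po2 || pc2) = true ∨ (occs t2 (VLabel.openv x)).map (· + 1) ≠ [] ∨
          (occs t2 (VLabel.closev x)).map (· + 1) ≠ [] := by
        rcases hc' with h | h | h
        · exact Or.inl h
        · exact Or.inr (Or.inl (fun hm => h (List.map_eq_nil_iff.1 hm)))
        · exact Or.inr (Or.inr (fun hm => h (List.map_eq_nil_iff.1 hm)))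
      obtain ⟨hu2, hw2⟩ := C2 hc
      constructor
      · cases hpo2 : po2 with
        | true =>
          rw [hpo2] at hu2
          have hzz0 : (occs t2 (VLabel.openv x)).map (· + 1) = [] := by simpa using hu2
          have hzz : occs t2 (VLabel.openv x) = [] := List.map_eq_nil_iff.1 hzz0
          simp [hzz]
        | false =>
          rw [hpo2] at hu2
          have hzz : occs t2 (VLabel.openv x) = [a - 1] := map_succ_singleton (by simpa using hu2)
          simp [hzz]
      · cases hpc2 : pc2 with
        | true =>
          rw [hpc2] at hw2
          have hzz0 : (occs t2 (VLabel.closev x)).map (· + 1) = [] := by simpa using hw2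
          have hzz : occs t2 (VLabel.closev x) = [] := List.map_eq_nil_iff.1 hzz0
          simp [hzz]
        | false =>
          rw [hpc2] at hw2
          have hzz : occs t2 (VLabel.closev x) = [b - 1] := map_succ_singleton (by simpa using hw2)
          simp [hzz]
    · intro hne; exact absurd hpo hne
    · intro hne; exact absurd hpc hne
    · intro h5
      obtain ⟨hU1, hU2⟩ := C5 h5
      constructor
      · rcases hU1 with h | h | h
        · exact Or.inl h
        · exact Or.inr (Or.inl (fun hm => h (by rw [hm]; rfl)))
        · exact Or.inr (Or.inr (fun hm => h (by rw [hm]; rfl)))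
      · rcases hU2 with h | h | h
        · exact Or.inl h
        · exact Or.inr (Or.inl (fun hm => h (by rw [hm]; rfl)))
        · exact Or.inr (Or.inr (fun hm => h (by rw [hm]; rfl)))

section Product

variable {A1 A2 : VA Sig}

theorem occ_singleton {o cl : List ℕ} (h : OccValid o cl) (hne : o ≠ []) :
    ∃ a b, o = [a] ∧ cl = [b] := by
  obtain ⟨hl, hlc, hi, _⟩ := h
  cases o with
  | nil => exact absurd rfl hne
  | cons a t =>
    have ht : t = [] := by simp at hl; exact hl
    subst ht
    have hcne : cl ≠ [] := fun he => by rw [hi.2 he] at hne; exact hne rfl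
    cases cl with
    | nil => exact absurd rfl hcne
    | cons b t' =>
      have ht' : t' = [] := by simp at hlc; exact hlc
      subst ht'
      exact ⟨a, b, rfl, rfl⟩

theorem minvx_start {ls1 ls2 : List (VLabel Sig)} {x : ℕ}
    (h1 : OccValid (occs ls1 (.openv x)) (occs ls1 (.closev x)))
    (h2 : OccValid (occs ls2 (.openv x)) (occs ls2 (.closev x)))
    (hc : ∀ s1 s2 : Span, runMapping ls1 x = some s1 → runMapping ls2 x = some s2 → s1 = s2) :
    MInvX st0 (occs ls1 (.openv x)) (occs ls1 (.closev x))
      (occs ls2 (.openv x)) (occs ls2 (.closev x)) := by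
  by_cases hne1 : occs ls1 (.openv x) = []
  · have hw1 : occs ls1 (.closev x) = [] := h1.2.2.1.1 hne1
    by_cases hne2 : occs ls2 (.openv x) = []
    · have hw2 : occs ls2 (.closev x) = [] := h2.2.2.1.1 hne2
      refine ⟨1, 1, ?_, ?_, by simp, by simp, by simp⟩
      · intro hcond
        rcases hcond with h | h | h
        · simp at h
        · exact absurd hne1 h
        · exact absurd hw1 h
      · intro hcond
        rcases hcond with h | h | h
        · simp at h
        · exact absurd hne2 h
        · exact absurd hw2 h
    · obtain ⟨a2, b2, ho2, hc2⟩ := occ_singleton h2 hne2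
      refine ⟨a2, b2, ?_, ?_, by simp, by simp, by simp⟩
      · intro hcond
        rcases hcond with h | h | h
        · simp at h
        · exact absurd hne1 h
        · exact absurd hw1 h
      · intro _
        simp [ho2, hc2]
  · obtain ⟨a1, b1, ho1, hc1⟩ := occ_singleton h1 hne1
    by_cases hne2 : occs ls2 (.openv x) = []
    · have hw2 : occs ls2 (.closev x) = [] := h2.2.2.1.1 hne2
      refine ⟨a1, b1, ?_, ?_, by simp, by simp, by simp⟩
      · intro _
        simp [ho1, hc1]
      · intro hcond
        rcases hcond with h | h | h
        · simp at h
        · exact absurd hne2 h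
        · exact absurd hw2 h
    · obtain ⟨a2, b2, ho2, hc2⟩ := occ_singleton h2 hne2
      have hm1 : runMapping ls1 x = some (a1, b1) := runMapping_single ho1 hc1
      have hm2 : runMapping ls2 x = some (a2, b2) := runMapping_single ho2 hc2
      have heq : (a1, b1) = (a2, b2) := hc _ _ hm1 hm2
      obtain ⟨rfl, rfl⟩ : a1 = a2 ∧ b1 = b2 := by simpa [Prod.ext_iff] using heq
      refine ⟨a1, b1, ?_, ?_, by simp, by simp, by simp⟩
      · intro _; simp [ho1, hc1]
      · intro _; simp [ho2, hc2]

theorem merge_exists : ∀ (n : ℕ) (t1 t2 : List (VLabel Sig)) (c : Cfg A1 A2) (q1 q2 f1 f2 : ℕ),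
    t1.length + t2.length ≤ n →
    VA.PathFrom A1 q1 t1 f1 → VA.PathFrom A2 q2 t2 f2 →
    readWord t1 = readWord t2 →
    (∀ x (hx : x ∈ ComVars A1 A2), MInvX (c ⟨x, hx⟩)
        (occs t1 (.openv x)) (occs t1 (.closev x)) (occs t2 (.openv x)) (occs t2 (.closev x))) →
    ∃ ls cend, MRun A1 A2 c q1 q2 t1 t2 ls cend f1 f2 := by
  intro n
  induction n with
  | zero =>
    intro t1 t2 c q1 q2 f1 f2 hlen hp1 hp2 hw hInv
    have h1 : t1 = [] := by cases t1 <;> simp_all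
    have h2 : t2 = [] := by cases t2 <;> simp_all
    subst h1 h2
    cases hp1
    cases hp2
    exact ⟨[], c, MRun.nil c q1 q2⟩
  | succ n ih =>
    intro t1 t2 c q1 q2 f1 f2 hlen hp1 hp2 hw hInv
    by_cases hA : ∃ l1 t1'', t1 = l1 :: t1'' ∧ isLetterL l1 = false
    · -- a component-1 non-letter step
      obtain ⟨l1, t1', rfl, hl1⟩ := hA
      cases hp1 with
      | cons hδ1 htail1 =>
      rename_i q1m
      have hlen' : t1'.length + t2.length ≤ n := by simp at hlen; omega
      have hw' : readWord t1' = readWord t2 := by rwa [readWord_cons_nonletter hl1] at hw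
      cases l1 with
      | letter σ => simp [isLetterL] at hl1
      | eps =>
        have hInv' : ∀ x (hx : x ∈ ComVars A1 A2), MInvX (c ⟨x, hx⟩)
            (occs t1' (.openv x)) (occs t1' (.closev x))
            (occs t2 (.openv x)) (occs t2 (.closev x)) := by
          intro x hx
          have hh := hInv x hx
          rwa [occs_cons_nonletter_ne (a := VLabel.eps) rfl (by simp) t1',
            occs_cons_nonletter_ne (a := VLabel.eps) rfl (by simp) t1'] at hh
        obtain ⟨ls', cend, hr⟩ := ih t1' t2 c q1m q2 f1 f2 hlen' htail1 hp2 hw' hInv'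
        exact ⟨_, cend, MRun.cons (PStep.free1 hδ1 rfl (by simp [labelVars])) hr⟩
      | openv z =>
        by_cases hzK : z ∈ ComVars A1 A2
        · have hInvz := hInv z hzK
          have hu1 : occs (VLabel.openv z :: t1') (VLabel.openv z)
              = 1 :: occs t1' (VLabel.openv z) := occs_cons_nonletter_self (a := VLabel.openv z) rfl _
          have hwz : occs (VLabel.openv z :: t1') (VLabel.closev z)
              = occs t1' (VLabel.closev z) := occs_cons_nonletter_ne (a := VLabel.openv z) rfl (by simp) _
          cases hcz : c ⟨z, hzK⟩ with
          | inr bb =>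
            cases bb with
            | true =>
              have hInv' : ∀ x (hx : x ∈ ComVars A1 A2), MInvX (c ⟨x, hx⟩)
                  (occs t1' (.openv x)) (occs t1' (.closev x))
                  (occs t2 (.openv x)) (occs t2 (.closev x)) := by
                intro x hx
                have hh := hInv x hx
                by_cases hxz : x = z
                · subst hxz
                  have hxeq : (⟨x, hx⟩ : {y // y ∈ ComVars A1 A2}) = ⟨x, hzK⟩ := Subtype.ext rfl
                  rw [hxeq] at hh ⊢
                  rw [hcz] at hh ⊢
                  exact hh
                · rwa [occs_cons_nonletter_ne (a := VLabel.openv z) rfl (by simp [Ne.symm hxz]) t1',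
                    occs_cons_nonletter_ne (a := VLabel.openv z) rfl (by simp) t1'] at hh
              obtain ⟨ls', cend, hr⟩ := ih t1' t2 c q1m q2 f1 f2 hlen' htail1 hp2 hw' hInv'
              exact ⟨_, cend, MRun.cons (PStep.excl1op hzK hcz (Or.inl rfl) hδ1) hr⟩
            | false =>
              exfalso
              rw [hcz] at hInvz
              obtain ⟨hz1, hz2⟩ := hInvz
              rw [hu1] at hz1
              cases hz1
          | inl s =>
            obtain ⟨⟨po1, pc1⟩, po2, pc2⟩ := s
            rw [hcz] at hInvz
            obtain ⟨a, b, C1, C2, C3, C4, C5⟩ := hInvz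
            have hU1 : (po1 || pc1) = true ∨ occs (VLabel.openv z :: t1') (VLabel.openv z) ≠ []
                ∨ occs (VLabel.openv z :: t1') (VLabel.closev z) ≠ [] := by
              right; left; rw [hu1]; simp
            obtain ⟨hc1, hc2⟩ := C1 hU1
            have hpo1 : po1 = false := by
              cases po1
              · rfl
              · rw [hu1] at hc1; simp at hc1
            subst hpo1
            rw [hu1] at hc1
            simp only [Bool.not_false, cnd_true] at hc1
            have ha : a = 1 := by
              have := congrArg (fun l => l.head?) hc1
              simpa using this.symm
            have hrest : occs t1' (VLabel.openv z) = [] := by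
              have := congrArg (fun l => l.tail) hc1
              simpa using this
            rw [hwz] at hc2
            subst ha
            by_cases hU2 : (po2 || pc2) = true ∨ occs t2 (VLabel.openv z) ≠ []
                ∨ occs t2 (VLabel.closev z) ≠ []
            · -- shared open
              have hstep := PStep.open1 (A2 := A2) (q2 := q2) hzK hcz hδ1
              have hInv' : ∀ x (hx : x ∈ ComVars A1 A2),
                  MInvX ((Function.update c ⟨z, hzK⟩ (Sum.inl ((true, pc1), (po2, pc2)))) ⟨x, hx⟩)
                  (occs t1' (.openv x)) (occs t1' (.closev x))
                  (occs t2 (.openv x)) (occs t2 (.closev x)) := by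
                intro x hx
                by_cases hxz : x = z
                · subst hxz
                  have hxeq : (⟨x, hx⟩ : {y // y ∈ ComVars A1 A2}) = ⟨x, hzK⟩ := Subtype.ext rfl
                  rw [hxeq, Function.update_self]
                  refine ⟨1, b, ?_, C2, by simp, C4, ?_⟩
                  · intro _
                    constructor
                    · simpa using hrest
                    · exact hc2
                  · intro _
                    exact ⟨Or.inl (by simp), hU2⟩
                · have hupd : (Function.update c ⟨z, hzK⟩ (Sum.inl ((true, pc1), (po2, pc2)))) ⟨x, hx⟩
                      = c ⟨x, hx⟩ := Function.update_of_ne (by simp [Subtype.ext_iff, hxz]) _ _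
                  rw [hupd]
                  have hh := hInv x hx
                  rwa [occs_cons_nonletter_ne (a := VLabel.openv z) rfl (by simp [Ne.symm hxz]) t1',
                    occs_cons_nonletter_ne (a := VLabel.openv z) rfl (by simp) t1'] at hh
              obtain ⟨ls', cend, hr⟩ := ih t1' t2 _ q1m q2 f1 f2 hlen' htail1 hp2 hw' hInv'
              exact ⟨_, cend, MRun.cons hstep hr⟩
            · -- exclusive
              push_neg at hU2
              obtain ⟨hb2, hu2e, hw2e⟩ := hU2
              have hpo2f : po2 = false := by
                cases po2
                · rfl
                · exact absurd (by simp) hb2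
              have hpc2f : pc2 = false := by
                cases pc2
                · rfl
                · exact absurd (by simp) hb2
              have hstep := PStep.excl1enter (A2 := A2) (q2 := q2) hzK
                (show c ⟨z, hzK⟩ = Sum.inl (((false : Bool), pc1), ((false : Bool), (false : Bool))) by
                  rw [hcz, hpo2f, hpc2f]) (Or.inl rfl) hδ1
              have hInv' : ∀ x (hx : x ∈ ComVars A1 A2),
                  MInvX ((Function.update c ⟨z, hzK⟩ (Sum.inr true)) ⟨x, hx⟩)
                  (occs t1' (.openv x)) (occs t1' (.closev x))
                  (occs t2 (.openv x)) (occs t2 (.closev x)) := by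
                intro x hx
                by_cases hxz : x = z
                · subst hxz
                  have hxeq : (⟨x, hx⟩ : {y // y ∈ ComVars A1 A2}) = ⟨x, hzK⟩ := Subtype.ext rfl
                  rw [hxeq, Function.update_self]
                  exact ⟨hu2e, hw2e⟩
                · have hupd : (Function.update c ⟨z, hzK⟩ (Sum.inr true)) ⟨x, hx⟩
                      = c ⟨x, hx⟩ := Function.update_of_ne (by simp [Subtype.ext_iff, hxz]) _ _
                  rw [hupd]
                  have hh := hInv x hx
                  rwa [occs_cons_nonletter_ne (a := VLabel.openv z) rfl (by simp [Ne.symm hxz]) t1',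
                    occs_cons_nonletter_ne (a := VLabel.openv z) rfl (by simp) t1'] at hh
              obtain ⟨ls', cend, hr⟩ := ih t1' t2 _ q1m q2 f1 f2 hlen' htail1 hp2 hw' hInv'
              exact ⟨_, cend, MRun.cons hstep hr⟩
        · -- z not common: free move
          have hInv' : ∀ x (hx : x ∈ ComVars A1 A2), MInvX (c ⟨x, hx⟩)
              (occs t1' (.openv x)) (occs t1' (.closev x))
              (occs t2 (.openv x)) (occs t2 (.closev x)) := by
            intro x hx
            have hxz : x ≠ z := fun he => hzK (he ▸ hx)
            have hh := hInv x hx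
            rwa [occs_cons_nonletter_ne (a := VLabel.openv z) rfl (by simp [Ne.symm hxz]) t1',
              occs_cons_nonletter_ne (a := VLabel.openv z) rfl (by simp) t1'] at hh
          obtain ⟨ls', cend, hr⟩ := ih t1' t2 c q1m q2 f1 f2 hlen' htail1 hp2 hw' hInv'
          refine ⟨_, cend, MRun.cons (PStep.free1 hδ1 rfl ?_) hr⟩
          intro y hy
          simp [labelVars] at hy
          subst hy
          exact hzK
      | closev z =>
        by_cases hzK : z ∈ ComVars A1 A2
        · have hInvz := hInv z hzK
          have hw1 : occs (VLabel.closev z :: t1') (VLabel.closev z)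
              = 1 :: occs t1' (VLabel.closev z) := occs_cons_nonletter_self (a := VLabel.closev z) rfl _
          have huz : occs (VLabel.closev z :: t1') (VLabel.openv z)
              = occs t1' (VLabel.openv z) := occs_cons_nonletter_ne (a := VLabel.closev z) rfl (by simp) _
          cases hcz : c ⟨z, hzK⟩ with
          | inr bb =>
            cases bb with
            | true =>
              have hInv' : ∀ x (hx : x ∈ ComVars A1 A2), MInvX (c ⟨x, hx⟩)
                  (occs t1' (.openv x)) (occs t1' (.closev x))
                  (occs t2 (.openv x)) (occs t2 (.closev x)) := by
                intro x hx
                have hh := hInv x hx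
                by_cases hxz : x = z
                · subst hxz
                  have hxeq : (⟨x, hx⟩ : {y // y ∈ ComVars A1 A2}) = ⟨x, hzK⟩ := Subtype.ext rfl
                  rw [hxeq] at hh ⊢
                  rw [hcz] at hh ⊢
                  exact hh
                · rwa [occs_cons_nonletter_ne (a := VLabel.closev z) rfl (by simp) t1',
                    occs_cons_nonletter_ne (a := VLabel.closev z) rfl (by simp [Ne.symm hxz]) t1'] at hh
              obtain ⟨ls', cend, hr⟩ := ih t1' t2 c q1m q2 f1 f2 hlen' htail1 hp2 hw' hInv'
              exact ⟨_, cend, MRun.cons (PStep.excl1op hzK hcz (Or.inr rfl) hδ1) hr⟩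
            | false =>
              exfalso
              rw [hcz] at hInvz
              obtain ⟨hz1, hz2⟩ := hInvz
              rw [hw1] at hz2
              cases hz2
          | inl s =>
            obtain ⟨⟨po1, pc1⟩, po2, pc2⟩ := s
            rw [hcz] at hInvz
            obtain ⟨a, b, C1, C2, C3, C4, C5⟩ := hInvz
            have hU1 : (po1 || pc1) = true ∨ occs (VLabel.closev z :: t1') (VLabel.openv z) ≠ []
                ∨ occs (VLabel.closev z :: t1') (VLabel.closev z) ≠ [] := by
              right; right; rw [hw1]; simp
            obtain ⟨hc1, hc2⟩ := C1 hU1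
            have hpc1 : pc1 = false := by
              cases pc1
              · rfl
              · rw [hw1] at hc2; simp at hc2
            subst hpc1
            rw [hw1] at hc2
            simp only [Bool.not_false, cnd_true] at hc2
            have hb : b = 1 := by
              have := congrArg (fun l => l.head?) hc2
              simpa using this.symm
            have hrest : occs t1' (VLabel.closev z) = [] := by
              have := congrArg (fun l => l.tail) hc2
              simpa using this
            rw [huz] at hc1
            subst hb
            by_cases hU2 : (po2 || pc2) = true ∨ occs t2 (VLabel.openv z) ≠ []
                ∨ occs t2 (VLabel.closev z) ≠ []
            · -- shared close
              have hstep := PStep.close1 (A2 := A2) (q2 := q2) hzK hcz hδ1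
              have hInv' : ∀ x (hx : x ∈ ComVars A1 A2),
                  MInvX ((Function.update c ⟨z, hzK⟩ (Sum.inl ((po1, true), (po2, pc2)))) ⟨x, hx⟩)
                  (occs t1' (.openv x)) (occs t1' (.closev x))
                  (occs t2 (.openv x)) (occs t2 (.closev x)) := by
                intro x hx
                by_cases hxz : x = z
                · subst hxz
                  have hxeq : (⟨x, hx⟩ : {y // y ∈ ComVars A1 A2}) = ⟨x, hzK⟩ := Subtype.ext rfl
                  rw [hxeq, Function.update_self]
                  refine ⟨a, 1, ?_, C2, C3, by simp, ?_⟩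
                  · intro _
                    constructor
                    · exact hc1
                    · simpa using hrest
                  · intro _
                    exact ⟨Or.inl (by simp), hU2⟩
                · have hupd : (Function.update c ⟨z, hzK⟩ (Sum.inl ((po1, true), (po2, pc2)))) ⟨x, hx⟩
                      = c ⟨x, hx⟩ := Function.update_of_ne (by simp [Subtype.ext_iff, hxz]) _ _
                  rw [hupd]
                  have hh := hInv x hx
                  rwa [occs_cons_nonletter_ne (a := VLabel.closev z) rfl (by simp) t1',
                    occs_cons_nonletter_ne (a := VLabel.closev z) rfl (by simp [Ne.symm hxz]) t1'] at hh
              obtain ⟨ls', cend, hr⟩ := ih t1' t2 _ q1m q2 f1 f2 hlen' htail1 hp2 hw' hInv'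
              exact ⟨_, cend, MRun.cons hstep hr⟩
            · -- exclusive
              push_neg at hU2
              obtain ⟨hb2, hu2e, hw2e⟩ := hU2
              have hpo2f : po2 = false := by
                cases po2
                · rfl
                · exact absurd (by simp) hb2
              have hpc2f : pc2 = false := by
                cases pc2
                · rfl
                · exact absurd (by simp) hb2
              have hstep := PStep.excl1enter (A2 := A2) (q2 := q2) hzK
                (show c ⟨z, hzK⟩ = Sum.inl (((po1 : Bool), false), ((false : Bool), (false : Bool))) by
                  rw [hcz, hpo2f, hpc2f]) (Or.inr rfl) hδ1
              have hInv' : ∀ x (hx : x ∈ ComVars A1 A2),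
                  MInvX ((Function.update c ⟨z, hzK⟩ (Sum.inr true)) ⟨x, hx⟩)
                  (occs t1' (.openv x)) (occs t1' (.closev x))
                  (occs t2 (.openv x)) (occs t2 (.closev x)) := by
                intro x hx
                by_cases hxz : x = z
                · subst hxz
                  have hxeq : (⟨x, hx⟩ : {y // y ∈ ComVars A1 A2}) = ⟨x, hzK⟩ := Subtype.ext rfl
                  rw [hxeq, Function.update_self]
                  exact ⟨hu2e, hw2e⟩
                · have hupd : (Function.update c ⟨z, hzK⟩ (Sum.inr true)) ⟨x, hx⟩
                      = c ⟨x, hx⟩ := Function.update_of_ne (by simp [Subtype.ext_iff, hxz]) _ _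
                  rw [hupd]
                  have hh := hInv x hx
                  rwa [occs_cons_nonletter_ne (a := VLabel.closev z) rfl (by simp) t1',
                    occs_cons_nonletter_ne (a := VLabel.closev z) rfl (by simp [Ne.symm hxz]) t1'] at hh
              obtain ⟨ls', cend, hr⟩ := ih t1' t2 _ q1m q2 f1 f2 hlen' htail1 hp2 hw' hInv'
              exact ⟨_, cend, MRun.cons hstep hr⟩
        · have hInv' : ∀ x (hx : x ∈ ComVars A1 A2), MInvX (c ⟨x, hx⟩)
              (occs t1' (.openv x)) (occs t1' (.closev x))
              (occs t2 (.openv x)) (occs t2 (.closev x)) := by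
            intro x hx
            have hxz : x ≠ z := fun he => hzK (he ▸ hx)
            have hh := hInv x hx
            rwa [occs_cons_nonletter_ne (a := VLabel.closev z) rfl (by simp) t1',
              occs_cons_nonletter_ne (a := VLabel.closev z) rfl (by simp [Ne.symm hxz]) t1'] at hh
          obtain ⟨ls', cend, hr⟩ := ih t1' t2 c q1m q2 f1 f2 hlen' htail1 hp2 hw' hInv'
          refine ⟨_, cend, MRun.cons (PStep.free1 hδ1 rfl ?_) hr⟩
          intro y hy
          simp [labelVars] at hy
          subst hy
          exact hzK
    · by_cases hB : ∃ l2 t2'', t2 = l2 :: t2'' ∧ isLetterL l2 = false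
      · -- a component-2 non-letter step
        obtain ⟨l2, t2', rfl, hl2⟩ := hB
        cases hp2 with
        | cons hδ2 htail2 =>
        rename_i q2m
        have hlen' : t1.length + t2'.length ≤ n := by simp at hlen; omega
        have hw' : readWord t1 = readWord t2' := by rwa [readWord_cons_nonletter hl2] at hw
        cases l2 with
        | letter σ => simp [isLetterL] at hl2
        | eps =>
          have hInv' : ∀ x (hx : x ∈ ComVars A1 A2), MInvX (c ⟨x, hx⟩)
              (occs t1 (.openv x)) (occs t1 (.closev x))
              (occs t2' (.openv x)) (occs t2' (.closev x)) := by
            intro x hx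
            have hh := hInv x hx
            rwa [occs_cons_nonletter_ne (a := VLabel.eps) rfl (by simp) t2',
              occs_cons_nonletter_ne (a := VLabel.eps) rfl (by simp) t2'] at hh
          obtain ⟨ls', cend, hr⟩ := ih t1 t2' c q1 q2m f1 f2 hlen' hp1 htail2 hw' hInv'
          exact ⟨_, cend, MRun.cons (PStep.free2 hδ2 rfl (by simp [labelVars])) hr⟩
        | openv z =>
          by_cases hzK : z ∈ ComVars A1 A2
          · have hInvz := hInv z hzK
            have hu2 : occs (VLabel.openv z :: t2') (VLabel.openv z)
                = 1 :: occs t2' (VLabel.openv z) := occs_cons_nonletter_self (a := VLabel.openv z) rfl _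
            have hwz : occs (VLabel.openv z :: t2') (VLabel.closev z)
                = occs t2' (VLabel.closev z) := occs_cons_nonletter_ne (a := VLabel.openv z) rfl (by simp) _
            cases hcz : c ⟨z, hzK⟩ with
            | inr bb =>
              cases bb with
              | false =>
                have hInv' : ∀ x (hx : x ∈ ComVars A1 A2), MInvX (c ⟨x, hx⟩)
                    (occs t1 (.openv x)) (occs t1 (.closev x))
                    (occs t2' (.openv x)) (occs t2' (.closev x)) := by
                  intro x hx
                  have hh := hInv x hx
                  by_cases hxz : x = z
                  · subst hxz
                    have hxeq : (⟨x, hx⟩ : {y // y ∈ ComVars A1 A2}) = ⟨x, hzK⟩ := Subtype.ext rfl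
                    rw [hxeq] at hh ⊢
                    rw [hcz] at hh ⊢
                    exact hh
                  · rwa [occs_cons_nonletter_ne (a := VLabel.openv z) rfl (by simp [Ne.symm hxz]) t2',
                      occs_cons_nonletter_ne (a := VLabel.openv z) rfl (by simp) t2'] at hh
                obtain ⟨ls', cend, hr⟩ := ih t1 t2' c q1 q2m f1 f2 hlen' hp1 htail2 hw' hInv'
                exact ⟨_, cend, MRun.cons (PStep.excl2op hzK hcz (Or.inl rfl) hδ2) hr⟩
              | true =>
                exfalso
                rw [hcz] at hInvz
                obtain ⟨hz1, hz2⟩ := hInvz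
                rw [hu2] at hz1
                cases hz1
            | inl s =>
              obtain ⟨⟨po1, pc1⟩, po2, pc2⟩ := s
              rw [hcz] at hInvz
              obtain ⟨a, b, C1, C2, C3, C4, C5⟩ := hInvz
              have hU2 : (po2 || pc2) = true ∨ occs (VLabel.openv z :: t2') (VLabel.openv z) ≠ []
                  ∨ occs (VLabel.openv z :: t2') (VLabel.closev z) ≠ [] := by
                right; left; rw [hu2]; simp
              obtain ⟨hc1, hc2⟩ := C2 hU2
              have hpo2 : po2 = false := by
                cases po2
                · rfl
                · rw [hu2] at hc1; simp at hc1
              subst hpo2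
              rw [hu2] at hc1
              simp only [Bool.not_false, cnd_true] at hc1
              have ha : a = 1 := by
                have := congrArg (fun l => l.head?) hc1
                simpa using this.symm
              have hrest : occs t2' (VLabel.openv z) = [] := by
                have := congrArg (fun l => l.tail) hc1
                simpa using this
              rw [hwz] at hc2
              subst ha
              by_cases hU1 : (po1 || pc1) = true ∨ occs t1 (VLabel.openv z) ≠ []
                  ∨ occs t1 (VLabel.closev z) ≠ []
              · -- shared open by component 2
                have hstep := PStep.open2 (A1 := A1) (q1 := q1) hzK hcz hδ2
                have hInv' : ∀ x (hx : x ∈ ComVars A1 A2),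
                    MInvX ((Function.update c ⟨z, hzK⟩ (Sum.inl ((po1, pc1), (true, pc2)))) ⟨x, hx⟩)
                    (occs t1 (.openv x)) (occs t1 (.closev x))
                    (occs t2' (.openv x)) (occs t2' (.closev x)) := by
                  intro x hx
                  by_cases hxz : x = z
                  · subst hxz
                    have hxeq : (⟨x, hx⟩ : {y // y ∈ ComVars A1 A2}) = ⟨x, hzK⟩ := Subtype.ext rfl
                    rw [hxeq, Function.update_self]
                    refine ⟨1, b, C1, ?_, by simp, C4, ?_⟩
                    · intro _
                      constructor
                      · simpa using hrest
                      · exact hc2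
                    · intro _
                      exact ⟨hU1, Or.inl (by simp)⟩
                  · have hupd : (Function.update c ⟨z, hzK⟩ (Sum.inl ((po1, pc1), (true, pc2)))) ⟨x, hx⟩
                        = c ⟨x, hx⟩ := Function.update_of_ne (by simp [Subtype.ext_iff, hxz]) _ _
                    rw [hupd]
                    have hh := hInv x hx
                    rwa [occs_cons_nonletter_ne (a := VLabel.openv z) rfl (by simp [Ne.symm hxz]) t2',
                      occs_cons_nonletter_ne (a := VLabel.openv z) rfl (by simp) t2'] at hh
                obtain ⟨ls', cend, hr⟩ := ih t1 t2' _ q1 q2m f1 f2 hlen' hp1 htail2 hw' hInv'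
                exact ⟨_, cend, MRun.cons hstep hr⟩
              · -- exclusive for component 2
                push_neg at hU1
                obtain ⟨hb1, hu1e, hw1e⟩ := hU1
                have hpo1f : po1 = false := by
                  cases po1
                  · rfl
                  · exact absurd (by simp) hb1
                have hpc1f : pc1 = false := by
                  cases pc1
                  · rfl
                  · exact absurd (by simp) hb1
                have hstep := PStep.excl2enter (A1 := A1) (q1 := q1) hzK
                  (show c ⟨z, hzK⟩ = Sum.inl (((false : Bool), (false : Bool)), ((false : Bool), pc2)) by
                    rw [hcz, hpo1f, hpc1f]) (Or.inl rfl) hδ2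
                have hInv' : ∀ x (hx : x ∈ ComVars A1 A2),
                    MInvX ((Function.update c ⟨z, hzK⟩ (Sum.inr false)) ⟨x, hx⟩)
                    (occs t1 (.openv x)) (occs t1 (.closev x))
                    (occs t2' (.openv x)) (occs t2' (.closev x)) := by
                  intro x hx
                  by_cases hxz : x = z
                  · subst hxz
                    have hxeq : (⟨x, hx⟩ : {y // y ∈ ComVars A1 A2}) = ⟨x, hzK⟩ := Subtype.ext rfl
                    rw [hxeq, Function.update_self]
                    exact ⟨hu1e, hw1e⟩
                  · have hupd : (Function.update c ⟨z, hzK⟩ (Sum.inr false)) ⟨x, hx⟩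
                        = c ⟨x, hx⟩ := Function.update_of_ne (by simp [Subtype.ext_iff, hxz]) _ _
                    rw [hupd]
                    have hh := hInv x hx
                    rwa [occs_cons_nonletter_ne (a := VLabel.openv z) rfl (by simp [Ne.symm hxz]) t2',
                      occs_cons_nonletter_ne (a := VLabel.openv z) rfl (by simp) t2'] at hh
                obtain ⟨ls', cend, hr⟩ := ih t1 t2' _ q1 q2m f1 f2 hlen' hp1 htail2 hw' hInv'
                exact ⟨_, cend, MRun.cons hstep hr⟩
          · have hInv' : ∀ x (hx : x ∈ ComVars A1 A2), MInvX (c ⟨x, hx⟩)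
                (occs t1 (.openv x)) (occs t1 (.closev x))
                (occs t2' (.openv x)) (occs t2' (.closev x)) := by
              intro x hx
              have hxz : x ≠ z := fun he => hzK (he ▸ hx)
              have hh := hInv x hx
              rwa [occs_cons_nonletter_ne (a := VLabel.openv z) rfl (by simp [Ne.symm hxz]) t2',
                occs_cons_nonletter_ne (a := VLabel.openv z) rfl (by simp) t2'] at hh
            obtain ⟨ls', cend, hr⟩ := ih t1 t2' c q1 q2m f1 f2 hlen' hp1 htail2 hw' hInv'
            refine ⟨_, cend, MRun.cons (PStep.free2 hδ2 rfl ?_) hr⟩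
            intro y hy
            simp [labelVars] at hy
            subst hy
            exact hzK
        | closev z =>
          by_cases hzK : z ∈ ComVars A1 A2
          · have hInvz := hInv z hzK
            have hw2 : occs (VLabel.closev z :: t2') (VLabel.closev z)
                = 1 :: occs t2' (VLabel.closev z) := occs_cons_nonletter_self (a := VLabel.closev z) rfl _
            have huz : occs (VLabel.closev z :: t2') (VLabel.openv z)
                = occs t2' (VLabel.openv z) := occs_cons_nonletter_ne (a := VLabel.closev z) rfl (by simp) _
            cases hcz : c ⟨z, hzK⟩ with
            | inr bb =>
              cases bb with
              | false =>
                have hInv' : ∀ x (hx : x ∈ ComVars A1 A2), MInvX (c ⟨x, hx⟩)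
                    (occs t1 (.openv x)) (occs t1 (.closev x))
                    (occs t2' (.openv x)) (occs t2' (.closev x)) := by
                  intro x hx
                  have hh := hInv x hx
                  by_cases hxz : x = z
                  · subst hxz
                    have hxeq : (⟨x, hx⟩ : {y // y ∈ ComVars A1 A2}) = ⟨x, hzK⟩ := Subtype.ext rfl
                    rw [hxeq] at hh ⊢
                    rw [hcz] at hh ⊢
                    exact hh
                  · rwa [occs_cons_nonletter_ne (a := VLabel.closev z) rfl (by simp) t2',
                      occs_cons_nonletter_ne (a := VLabel.closev z) rfl (by simp [Ne.symm hxz]) t2'] at hh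
                obtain ⟨ls', cend, hr⟩ := ih t1 t2' c q1 q2m f1 f2 hlen' hp1 htail2 hw' hInv'
                exact ⟨_, cend, MRun.cons (PStep.excl2op hzK hcz (Or.inr rfl) hδ2) hr⟩
              | true =>
                exfalso
                rw [hcz] at hInvz
                obtain ⟨hz1, hz2⟩ := hInvz
                rw [hw2] at hz2
                cases hz2
            | inl s =>
              obtain ⟨⟨po1, pc1⟩, po2, pc2⟩ := s
              rw [hcz] at hInvz
              obtain ⟨a, b, C1, C2, C3, C4, C5⟩ := hInvz
              have hU2 : (po2 || pc2) = true ∨ occs (VLabel.closev z :: t2') (VLabel.openv z) ≠ []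
                  ∨ occs (VLabel.closev z :: t2') (VLabel.closev z) ≠ [] := by
                right; right; rw [hw2]; simp
              obtain ⟨hc1, hc2⟩ := C2 hU2
              have hpc2 : pc2 = false := by
                cases pc2
                · rfl
                · rw [hw2] at hc2; simp at hc2
              subst hpc2
              rw [hw2] at hc2
              simp only [Bool.not_false, cnd_true] at hc2
              have hb : b = 1 := by
                have := congrArg (fun l => l.head?) hc2
                simpa using this.symm
              have hrest : occs t2' (VLabel.closev z) = [] := by
                have := congrArg (fun l => l.tail) hc2
                simpa using this
              rw [huz] at hc1
              subst hb
              by_cases hU1 : (po1 || pc1) = true ∨ occs t1 (VLabel.openv z) ≠ []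
                  ∨ occs t1 (VLabel.closev z) ≠ []
              · -- shared close by component 2
                have hstep := PStep.close2 (A1 := A1) (q1 := q1) hzK hcz hδ2
                have hInv' : ∀ x (hx : x ∈ ComVars A1 A2),
                    MInvX ((Function.update c ⟨z, hzK⟩ (Sum.inl ((po1, pc1), (po2, true)))) ⟨x, hx⟩)
                    (occs t1 (.openv x)) (occs t1 (.closev x))
                    (occs t2' (.openv x)) (occs t2' (.closev x)) := by
                  intro x hx
                  by_cases hxz : x = z
                  · subst hxz
                    have hxeq : (⟨x, hx⟩ : {y // y ∈ ComVars A1 A2}) = ⟨x, hzK⟩ := Subtype.ext rfl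
                    rw [hxeq, Function.update_self]
                    refine ⟨a, 1, C1, ?_, C3, by simp, ?_⟩
                    · intro _
                      constructor
                      · exact hc1
                      · simpa using hrest
                    · intro _
                      exact ⟨hU1, Or.inl (by simp)⟩
                  · have hupd : (Function.update c ⟨z, hzK⟩ (Sum.inl ((po1, pc1), (po2, true)))) ⟨x, hx⟩
                        = c ⟨x, hx⟩ := Function.update_of_ne (by simp [Subtype.ext_iff, hxz]) _ _
                    rw [hupd]
                    have hh := hInv x hx
                    rwa [occs_cons_nonletter_ne (a := VLabel.closev z) rfl (by simp) t2',
                      occs_cons_nonletter_ne (a := VLabel.closev z) rfl (by simp [Ne.symm hxz]) t2'] at hh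
                obtain ⟨ls', cend, hr⟩ := ih t1 t2' _ q1 q2m f1 f2 hlen' hp1 htail2 hw' hInv'
                exact ⟨_, cend, MRun.cons hstep hr⟩
              · -- exclusive for component 2
                push_neg at hU1
                obtain ⟨hb1, hu1e, hw1e⟩ := hU1
                have hpo1f : po1 = false := by
                  cases po1
                  · rfl
                  · exact absurd (by simp) hb1
                have hpc1f : pc1 = false := by
                  cases pc1
                  · rfl
                  · exact absurd (by simp) hb1
                have hstep := PStep.excl2enter (A1 := A1) (q1 := q1) hzK
                  (show c ⟨z, hzK⟩ = Sum.inl (((false : Bool), (false : Bool)), (po2, (false : Bool))) by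
                    rw [hcz, hpo1f, hpc1f]) (Or.inr rfl) hδ2
                have hInv' : ∀ x (hx : x ∈ ComVars A1 A2),
                    MInvX ((Function.update c ⟨z, hzK⟩ (Sum.inr false)) ⟨x, hx⟩)
                    (occs t1 (.openv x)) (occs t1 (.closev x))
                    (occs t2' (.openv x)) (occs t2' (.closev x)) := by
                  intro x hx
                  by_cases hxz : x = z
                  · subst hxz
                    have hxeq : (⟨x, hx⟩ : {y // y ∈ ComVars A1 A2}) = ⟨x, hzK⟩ := Subtype.ext rfl
                    rw [hxeq, Function.update_self]
                    exact ⟨hu1e, hw1e⟩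
                  · have hupd : (Function.update c ⟨z, hzK⟩ (Sum.inr false)) ⟨x, hx⟩
                        = c ⟨x, hx⟩ := Function.update_of_ne (by simp [Subtype.ext_iff, hxz]) _ _
                    rw [hupd]
                    have hh := hInv x hx
                    rwa [occs_cons_nonletter_ne (a := VLabel.closev z) rfl (by simp) t2',
                      occs_cons_nonletter_ne (a := VLabel.closev z) rfl (by simp [Ne.symm hxz]) t2'] at hh
                obtain ⟨ls', cend, hr⟩ := ih t1 t2' _ q1 q2m f1 f2 hlen' hp1 htail2 hw' hInv'
                exact ⟨_, cend, MRun.cons hstep hr⟩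
          · have hInv' : ∀ x (hx : x ∈ ComVars A1 A2), MInvX (c ⟨x, hx⟩)
                (occs t1 (.openv x)) (occs t1 (.closev x))
                (occs t2' (.openv x)) (occs t2' (.closev x)) := by
              intro x hx
              have hxz : x ≠ z := fun he => hzK (he ▸ hx)
              have hh := hInv x hx
              rwa [occs_cons_nonletter_ne (a := VLabel.closev z) rfl (by simp) t2',
                occs_cons_nonletter_ne (a := VLabel.closev z) rfl (by simp [Ne.symm hxz]) t2'] at hh
            obtain ⟨ls', cend, hr⟩ := ih t1 t2' c q1 q2m f1 f2 hlen' hp1 htail2 hw' hInv'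
            refine ⟨_, cend, MRun.cons (PStep.free2 hδ2 rfl ?_) hr⟩
            intro y hy
            simp [labelVars] at hy
            subst hy
            exact hzK
      · -- both runs are exhausted or start with a letter
        rcases t1 with _ | ⟨l1, t1'⟩
        · rcases t2 with _ | ⟨l2, t2'⟩
          · cases hp1
            cases hp2
            exact ⟨[], c, MRun.nil c q1 q2⟩
          · exfalso
            have hl2 : isLetterL l2 = true := by
              by_contra hc2
              exact hB ⟨l2, t2', rfl, by simpa using hc2⟩
            cases l2 <;> simp [isLetterL] at hl2
            rw [readWord_cons_letter] at hw
            simp [readWord] at hw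
        · have hl1 : isLetterL l1 = true := by
            by_contra hc1
            exact hA ⟨l1, t1', rfl, by simpa using hc1⟩
          cases l1 with
          | eps => simp [isLetterL] at hl1
          | openv z => simp [isLetterL] at hl1
          | closev z => simp [isLetterL] at hl1
          | letter σ =>
            rcases t2 with _ | ⟨l2, t2'⟩
            · exfalso
              rw [readWord_cons_letter] at hw
              simp [readWord] at hw
            · have hl2 : isLetterL l2 = true := by
                by_contra hc2
                exact hB ⟨l2, t2', rfl, by simpa using hc2⟩
              cases l2 with
              | eps => simp [isLetterL] at hl2
              | openv z => simp [isLetterL] at hl2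
              | closev z => simp [isLetterL] at hl2
              | letter τ =>
                cases hp1 with
                | cons hδ1 htail1 =>
                rename_i q1m
                cases hp2 with
                | cons hδ2 htail2 =>
                rename_i q2m
                rw [readWord_cons_letter, readWord_cons_letter] at hw
                obtain ⟨rfl, hw'⟩ : σ = τ ∧ readWord t1' = readWord t2' := by
                  simpa using hw
                have hsync : ∀ y : {y // y ∈ ComVars A1 A2}, SyncSt (c y) := by
                  rintro ⟨x, hx⟩
                  exact (minvx_letter (hInv x hx)).1
                have hInv' : ∀ x (hx : x ∈ ComVars A1 A2), MInvX (c ⟨x, hx⟩)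
                    (occs t1' (.openv x)) (occs t1' (.closev x))
                    (occs t2' (.openv x)) (occs t2' (.closev x)) :=
                  fun x hx => (minvx_letter (hInv x hx)).2
                obtain ⟨ls', cend, hr⟩ := ih t1' t2' c q1m q2m f1 f2
                  (by simp at hlen ⊢; omega) htail1 htail2 hw' hInv'
                exact ⟨_, cend, MRun.cons (PStep.letter hδ1 hδ2 hsync) hr⟩

end Product

/-! ### Part 7: the main construction -/

section Product

variable {A1 A2 : VA Sig} {enc : Cfg A1 A2 × ℕ × ℕ → ℕ}

theorem prod_sequential (henc : Function.Injective enc)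
    (h1 : A1.Sequential) (h2 : A2.Sequential) : (prodVA A1 A2 enc).Sequential := by
  intro ls ⟨qf, hpath, hqf⟩
  obtain ⟨ls1, ls2, c', q1', q2', rfl, hrun⟩ :=
    prodPath_mrun henc hpath (cfg0 A1 A2) A1.q0 A2.q0 rfl
  obtain ⟨hf1, hf2⟩ := prodF_decode henc hqf
  have hv1 : ValidLabels ls1 := h1 ls1 ⟨q1', hrun.path1, hf1⟩
  have hv2 : ValidLabels ls2 := h2 ls2 ⟨q2', hrun.path2, hf2⟩
  exact (mrun_semantics hrun hv1 hv2).1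

theorem prod_semantics (henc : Function.Injective enc)
    (h1 : A1.Sequential) (h2 : A2.Sequential) (d : List Sig) :
    vaSem (prodVA A1 A2 enc) d = joinSet (vaSem A1 d) (vaSem A2 d) := by
  ext μ
  constructor
  · rintro ⟨ls, ⟨qf, hpath, hqf⟩, hrd, hvl, rfl⟩
    obtain ⟨ls1, ls2, c', q1', q2', rfl, hrun⟩ :=
      prodPath_mrun henc hpath (cfg0 A1 A2) A1.q0 A2.q0 rfl
    obtain ⟨hf1, hf2⟩ := prodF_decode henc hqf
    have hv1 : ValidLabels ls1 := h1 ls1 ⟨q1', hrun.path1, hf1⟩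
    have hv2 : ValidLabels ls2 := h2 ls2 ⟨q2', hrun.path2, hf2⟩
    obtain ⟨hvls, hcomp, hmu⟩ := mrun_semantics hrun hv1 hv2
    obtain ⟨hw1, hw2, -⟩ := mrun_ginv hrun
    refine ⟨runMapping ls1, ⟨ls1, ⟨q1', hrun.path1, hf1⟩, by rw [hw1, hrd], hv1, rfl⟩,
      runMapping ls2, ⟨ls2, ⟨q2', hrun.path2, hf2⟩, by rw [hw2, hrd], hv2, rfl⟩, hcomp, hmu⟩
  · rintro ⟨μ1, ⟨ls1, ⟨f1, hp1, hf1⟩, hrd1, hv1, rfl⟩,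
      μ2, ⟨ls2, ⟨f2, hp2, hf2⟩, hrd2, hv2, rfl⟩, hcomp, rfl⟩
    have hInv0 : ∀ x (hx : x ∈ ComVars A1 A2), MInvX ((cfg0 A1 A2) ⟨x, hx⟩)
        (occs ls1 (.openv x)) (occs ls1 (.closev x))
        (occs ls2 (.openv x)) (occs ls2 (.closev x)) := by
      intro x hx
      exact minvx_start (validLabels_iff.1 hv1 x) (validLabels_iff.1 hv2 x)
        (fun s1 s2 e1 e2 => hcomp x s1 s2 e1 e2)
    obtain ⟨ls, cend, hrun⟩ := merge_exists (ls1.length + ls2.length) ls1 ls2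
      (cfg0 A1 A2) A1.q0 A2.q0 f1 f2 le_rfl hp1 hp2 (by rw [hrd1, hrd2]) hInv0
    obtain ⟨hvls, -, hmu⟩ := mrun_semantics hrun hv1 hv2
    obtain ⟨hw1, -, -⟩ := mrun_ginv hrun
    refine ⟨ls, ⟨enc (cend, f1, f2), ?_, prodF_mem henc hf1 hf2⟩, ?_, hvls, hmu.symm⟩
    · exact (mrun_prodPath (enc := enc) hrun (q0_mem_statesOf A1) (q0_mem_statesOf A2)).1
    · rw [← hw1, hrd1]

theorem pTrans_subset :
    pTrans A1 A2 enc ⊆ pStates A1 A2 enc ×ˢ pLabels A1 A2 ×ˢ pStates A1 A2 enc := by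
  intro t ht
  simp only [pTrans, Finset.mem_filter] at ht
  exact ht.1

theorem prod_size :
    vaSize (prodVA A1 A2 enc) ≤
      Fintype.card (Cfg A1 A2) * (statesOf A1).card * (statesOf A2).card +
      (Fintype.card (Cfg A1 A2) * (statesOf A1).card * (statesOf A2).card) *
        ((pLabels A1 A2 : Finset (VLabel Sig)).card *
          (Fintype.card (Cfg A1 A2) * (statesOf A1).card * (statesOf A2).card)) := by
  have hpS : (pStates A1 A2 enc).card ≤
      Fintype.card (Cfg A1 A2) * (statesOf A1).card * (statesOf A2).card := by
    calc (pStates A1 A2 enc).card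
        ≤ ((Finset.univ : Finset (Cfg A1 A2)) ×ˢ statesOf A1 ×ˢ statesOf A2).card :=
          Finset.card_image_le
      _ = Fintype.card (Cfg A1 A2) * ((statesOf A1).card * (statesOf A2).card) := by
          rw [Finset.card_product, Finset.card_product, Finset.card_univ]
      _ = _ := by ring
  have hsub : statesOf (prodVA A1 A2 enc) ⊆ pStates A1 A2 enc := by
    intro q hq
    simp only [statesOf, Finset.mem_insert, Finset.mem_union, Finset.mem_image] at hq
    rcases hq with rfl | ⟨⟨hq | ⟨t, ht, rfl⟩⟩ | ⟨t, ht, rfl⟩⟩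
    · exact mem_pStates (q0_mem_statesOf A1) (q0_mem_statesOf A2)
    · -- q ∈ F
      simp only [prodVA, Finset.mem_image] at hq
      obtain ⟨⟨c0, g1, g2⟩, hmem, rfl⟩ := hq
      simp only [Finset.mem_product] at hmem
      exact mem_pStates (F_subset_statesOf A1 hmem.2.1) (F_subset_statesOf A2 hmem.2.2)
    · -- source of transition
      have hmem := pTrans_subset (ht : t ∈ pTrans A1 A2 enc)
      simp only [Finset.mem_product] at hmem
      exact hmem.1
    · have hmem := pTrans_subset (ht : t ∈ pTrans A1 A2 enc)
      simp only [Finset.mem_product] at hmem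
      exact hmem.2.2
  have hδ : (prodVA A1 A2 enc).δ.card ≤
      (pStates A1 A2 enc).card * ((pLabels A1 A2 : Finset (VLabel Sig)).card *
        (pStates A1 A2 enc).card) := by
    calc (prodVA A1 A2 enc).δ.card
        ≤ (pStates A1 A2 enc ×ˢ pLabels A1 A2 ×ˢ pStates A1 A2 enc).card :=
          Finset.card_le_card pTrans_subset
      _ = _ := by rw [Finset.card_product, Finset.card_product]
  calc vaSize (prodVA A1 A2 enc)
      = (statesOf (prodVA A1 A2 enc)).card + (prodVA A1 A2 enc).δ.card := rfl
    _ ≤ Fintype.card (Cfg A1 A2) * (statesOf A1).card * (statesOf A2).card +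
        (pStates A1 A2 enc).card * ((pLabels A1 A2 : Finset (VLabel Sig)).card *
          (pStates A1 A2 enc).card) :=
        Nat.add_le_add ((Finset.card_le_card hsub).trans hpS) hδ
    _ ≤ _ := by
        apply Nat.add_le_add_left
        exact Nat.mul_le_mul hpS (Nat.mul_le_mul_left _ hpS)

theorem pLabels_card :
    (pLabels A1 A2 : Finset (VLabel Sig)).card ≤ 1 + A1.δ.card + A2.δ.card := by
  calc (pLabels A1 A2 : Finset (VLabel Sig)).card
      ≤ (A1.δ.image (fun t => t.2.1) ∪ A2.δ.image (fun t => t.2.1)).card + 1 :=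
        Finset.card_insert_le _ _
    _ ≤ ((A1.δ.image (fun t => t.2.1)).card + (A2.δ.image (fun t => t.2.1)).card) + 1 :=
        Nat.add_le_add_right (Finset.card_union_le _ _) 1
    _ ≤ (A1.δ.card + A2.δ.card) + 1 :=
        Nat.add_le_add_right (Nat.add_le_add Finset.card_image_le Finset.card_image_le) 1
    _ = 1 + A1.δ.card + A2.δ.card := by ring

theorem cfg_card :
    Fintype.card (Cfg A1 A2) = 18 ^ (varsOf A1 ∩ varsOf A2).card := by
  have h1 : Fintype.card (Cfg A1 A2) = Fintype.card ({x // x ∈ ComVars A1 A2} → St) :=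
    Fintype.card_congr (Equiv.refl _)
  rw [h1, Fintype.card_fun]
  have h2 : Fintype.card St = 18 := by simp
  rw [h2, Fintype.card_coe]

end Product

end Spanners

namespace Spanners

variable {Sig : Type} [DecidableEq Sig]

theorem statement6 :
    ∃ (f : ℕ → ℕ) (p : Polynomial ℕ), ∀ A1 A2 : VA Sig, A1.Sequential → A2.Sequential →
      ∃ A : VA Sig, A.Sequential ∧
        (∀ d : List Sig, vaSem A d = joinSet (vaSem A1 d) (vaSem A2 d)) ∧
        vaSize A ≤ f ((varsOf A1 ∩ varsOf A2).card) * p.eval (vaSize A1 + vaSize A2) := by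
  refine ⟨fun k => 4 * 18 ^ (2 * k), (Polynomial.X + Polynomial.C 1) ^ 5, ?_⟩
  intro A1 A2 h1 h2
  obtain ⟨enc, henc⟩ := exists_injective_nat (Cfg A1 A2 × ℕ × ℕ)
  refine ⟨prodVA A1 A2 enc, prod_sequential henc h1 h2, prod_semantics henc h1 h2, ?_⟩
  -- size bound
  set k := (varsOf A1 ∩ varsOf A2).card with hk
  set N := vaSize A1 + vaSize A2 with hN
  have hpeval : ((Polynomial.X + Polynomial.C 1 : Polynomial ℕ) ^ 5).eval N = (N + 1) ^ 5 := by
    simp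
  rw [hpeval]
  have hC : Fintype.card (Cfg A1 A2) = 18 ^ k := cfg_card
  have hn1 : (statesOf A1).card ≤ N := by
    have : (statesOf A1).card ≤ vaSize A1 := Nat.le_add_right _ _
    omega
  have hn2 : (statesOf A2).card ≤ N := by
    have : (statesOf A2).card ≤ vaSize A2 := Nat.le_add_right _ _
    omega
  have hm : (pLabels A1 A2 : Finset (VLabel Sig)).card ≤ N + 1 := by
    have := pLabels_card (A1 := A1) (A2 := A2)
    have hm1 : A1.δ.card ≤ vaSize A1 := Nat.le_add_left _ _
    have hm2 : A2.δ.card ≤ vaSize A2 := Nat.le_add_left _ _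
    omega
  have hsz := prod_size (A1 := A1) (A2 := A2) (enc := enc)
  rw [hC] at hsz
  set C := 18 ^ k with hCdef
  have hC1 : 1 ≤ C := Nat.one_le_pow _ _ (by norm_num)
  have hN1 : (statesOf A1).card ≤ N + 1 := by omega
  have hN2 : (statesOf A2).card ≤ N + 1 := by omega
  have hstep1 : C * (statesOf A1).card * (statesOf A2).card ≤ C * (N + 1) * (N + 1) :=
    Nat.mul_le_mul (Nat.mul_le_mul_left C hN1) hN2
  have hbig : C * (N + 1) * (N + 1) *
      ((N + 1) * (C * (N + 1) * (N + 1))) = C ^ 2 * (N + 1) ^ 5 := by ring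
  calc vaSize (prodVA A1 A2 enc)
      ≤ C * (statesOf A1).card * (statesOf A2).card +
        (C * (statesOf A1).card * (statesOf A2).card) *
          ((pLabels A1 A2 : Finset (VLabel Sig)).card *
            (C * (statesOf A1).card * (statesOf A2).card)) := hsz
    _ ≤ C * (N + 1) * (N + 1) +
        (C * (N + 1) * (N + 1)) * ((N + 1) * (C * (N + 1) * (N + 1))) := by
        apply Nat.add_le_add hstep1
        exact Nat.mul_le_mul hstep1 (Nat.mul_le_mul hm hstep1)
    _ ≤ C ^ 2 * (N + 1) ^ 5 + C ^ 2 * (N + 1) ^ 5 := by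
        rw [hbig]
        apply Nat.add_le_add_right
        calc C * (N + 1) * (N + 1) ≤ C ^ 2 * ((N + 1) * (N + 1)) := by
              have hcc : C ≤ C ^ 2 := Nat.le_self_pow (by norm_num) C
              calc C * (N + 1) * (N + 1) = C * ((N + 1) * (N + 1)) := by ring
                _ ≤ C ^ 2 * ((N + 1) * (N + 1)) := Nat.mul_le_mul_right _ hcc
          _ ≤ C ^ 2 * (N + 1) ^ 5 := by
              apply Nat.mul_le_mul_left
              have h15 : (N + 1) * (N + 1) = (N + 1) ^ 2 := by ring
              rw [h15]
              exact Nat.pow_le_pow_right (by omega) (by omega)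
    _ ≤ 4 * 18 ^ (2 * k) * (N + 1) ^ 5 := by
        have hCsq : C ^ 2 = 18 ^ (2 * k) := by
          rw [hCdef, ← pow_mul, Nat.mul_comm]
        rw [hCsq]
        have he1 : 18 ^ (2 * k) * (N + 1) ^ 5 + 18 ^ (2 * k) * (N + 1) ^ 5
            = 2 * (18 ^ (2 * k) * (N + 1) ^ 5) := by ring
        have he2 : 4 * 18 ^ (2 * k) * (N + 1) ^ 5 = 4 * (18 ^ (2 * k) * (N + 1) ^ 5) := by
          ring
        rw [he1, he2]
        exact Nat.mul_le_mul_right _ (by norm_num)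

end Spanners
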